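/- arXiv:1711.01366 — 6 statements merged into one kernel-verified Lean document; each statement's English description precedes it below -/
import Mathlib

section
/- Let n ≥ 0 be a real constant and let P > 0 be a real constant. For i = 1, 2, let α_i : [t_i⁰, ∞) → (0, α_i⁰] be continuous bijections (for some t_i⁰ > 0 and α_i⁰ ∈ (0,1)) such that α_i(t) = t^n e^{−t} (1 + o(1)) as t → +∞, i.e. α_i(t)/(t^n e^{−t}) → 1. For t₁ ≥ t₁⁰ large, let t₂ = t₂(t₁) be determined by the constraint ln α₂(t₂) = P² · ln α₁(t₁) (equivalently √(ln α₂(t₂)/ln α₁(t₁)) = P). Then, as t₁ → +∞, e^{√(t₁ t₂)} is asymptotically equivalent to α₁(t₁)^{−P} · ( (−ln α₁(t₁))^{P} · (−ln α₂(t₂))^{1/P} )^{n/2}, i.e. the ratio of the two quantities tends to 1. -/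
open Real Filter

private lemma aux_log_div : Tendsto (fun x : ℝ => Real.log x / x) atTop (nhds 0) := by
  have := Real.tendsto_pow_log_div_mul_add_atTop 1 0 1 one_ne_zero
  simpa using this

private lemma aux_sq_log_div : Tendsto (fun x : ℝ => (Real.log x) ^ 2 / x) atTop (nhds 0) := by
  have := Real.tendsto_pow_log_div_mul_add_atTop 1 0 2 one_ne_zero
  simpa using this

private lemma logE (n : ℝ) (α : ℝ → ℝ) (hpos : ∀ᶠ t : ℝ in atTop, 0 < α t)
    (hasymp : Tendsto (fun t => α t / (t ^ n * Real.exp (-t))) atTop (nhds 1)) :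
    Tendsto (fun t => Real.log (α t) - (n * Real.log t - t)) atTop (nhds 0) := by
  have h := (Real.continuousAt_log one_ne_zero).tendsto.comp hasymp
  rw [Real.log_one] at h
  refine h.congr' ?_
  filter_upwards [hpos, eventually_gt_atTop (0:ℝ)] with t hα ht
  rw [Function.comp_apply, Real.log_div (ne_of_gt hα) (by positivity),
    Real.log_mul (by positivity) (Real.exp_ne_zero _), Real.log_rpow ht, Real.log_exp]
  ring

private lemma sub_log_atTop (n : ℝ) :
    Tendsto (fun t : ℝ => t - n * Real.log t) atTop atTop := by
  have h : Tendsto (fun t : ℝ => t * (1 - n * (Real.log t / t))) atTop atTop := by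
    have hg : Tendsto (fun t : ℝ => 1 - n * (Real.log t / t)) atTop (nhds 1) := by
      simpa using tendsto_const_nhds.sub (aux_log_div.const_mul n)
    simpa [mul_comm] using hg.pos_mul_atTop (by norm_num) tendsto_id
  refine h.congr' ?_
  filter_upwards [eventually_gt_atTop (0:ℝ)] with t ht
  field_simp

private lemma Ldiv (n : ℝ) (α : ℝ → ℝ)
    (hE : Tendsto (fun t => Real.log (α t) - (n * Real.log t - t)) atTop (nhds 0)) :
    Tendsto (fun t => -Real.log (α t) / t) atTop (nhds 1) := by
  have h : Tendsto (fun t : ℝ => 1 - n * (Real.log t / t)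
      - (Real.log (α t) - (n * Real.log t - t)) * t⁻¹) atTop (nhds 1) := by
    have := (tendsto_const_nhds (x := (1:ℝ)) (f := atTop)).sub (aux_log_div.const_mul n)
      |>.sub (hE.mul tendsto_inv_atTop_zero)
    simpa using this
  refine h.congr' ?_
  filter_upwards [eventually_gt_atTop (0:ℝ)] with t ht
  field_simp
  ring

private lemma key_identity (n P t t₂ s E₁ E₂ lgt lgt₂ lgL₁ lgL₂ : ℝ)
    (hP : P ≠ 0) (ht : 0 < t) (hsP : s + P ≠ 0)
    (hs : s ^ 2 = t₂ / t)
    (hcon : t₂ - n * lgt₂ - E₂ = P ^ 2 * (t - n * lgt - E₁)) :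
    t * s - (P * (t - n * lgt - E₁) + n / 2 * (P * lgL₁ + 1 / P * lgL₂)) =
      n * (P ^ 2 - 1) * (n * (1 - P ^ 2) * (lgt ^ 2 / t)
          + lgt / t * (n * (lgt₂ - lgt) + E₂ - P ^ 2 * E₁)) / (2 * P * (s + P) ^ 2)
        + (n * (lgt₂ - lgt) + E₂ - P ^ 2 * E₁) / (s + P)
        + P * E₁ - n / 2 * (P * (lgL₁ - lgt) + ((lgt₂ - lgt) + (lgL₂ - lgt₂)) / P) := by
  have hE₂ : E₂ = t₂ - n * lgt₂ - P ^ 2 * (t - n * lgt - E₁) := by linarith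
  have ht₂ : t₂ = s ^ 2 * t := by
    field_simp at hs; linarith
  subst hE₂ ht₂
  field_simp
  ring

/-- Lemma 2 of the paper. If `α_i(t) ∼ t^n e^(-t)` as `t → ∞` and
`t₂ = t₂(t₁)` is chosen so that `ln α₂(t₂) = P² · ln α₁(t₁)`, then
`e^(√(t₁t₂)) ∼ α₁(t₁)^(-P) ((-ln α₁(t₁))^P (-ln α₂(t₂))^(1/P))^(n/2)` as `t₁ → ∞`. -/
theorem exp_sqrt_mul_asymptotic (n P : ℝ) (hn : 0 ≤ n) (hP : 0 < P)
    (t₁0 t₂0 a₁0 a₂0 : ℝ) (ht₁0 : 0 < t₁0) (ht₂0 : 0 < t₂0)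
    (ha₁0 : a₁0 ∈ Set.Ioo (0 : ℝ) 1) (ha₂0 : a₂0 ∈ Set.Ioo (0 : ℝ) 1)
    (α₁ α₂ : ℝ → ℝ)
    (hcont₁ : ContinuousOn α₁ (Set.Ici t₁0))
    (hbij₁ : Set.BijOn α₁ (Set.Ici t₁0) (Set.Ioc 0 a₁0))
    (hcont₂ : ContinuousOn α₂ (Set.Ici t₂0))
    (hbij₂ : Set.BijOn α₂ (Set.Ici t₂0) (Set.Ioc 0 a₂0))
    (hasymp₁ : Tendsto (fun t => α₁ t / (t ^ n * Real.exp (-t))) atTop (nhds 1))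
    (hasymp₂ : Tendsto (fun t => α₂ t / (t ^ n * Real.exp (-t))) atTop (nhds 1))
    (t₂f : ℝ → ℝ)
    (ht₂f : ∀ᶠ t₁ in atTop, t₂f t₁ ∈ Set.Ici t₂0 ∧
      Real.log (α₂ (t₂f t₁)) = P ^ 2 * Real.log (α₁ t₁)) :
    Tendsto
      (fun t₁ : ℝ =>
        Real.exp (Real.sqrt (t₁ * t₂f t₁)) /
          (α₁ t₁ ^ (-P) *
            ((-Real.log (α₁ t₁)) ^ P * (-Real.log (α₂ (t₂f t₁))) ^ (1 / P)) ^ (n / 2)))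
      atTop (nhds 1) := by
  have hP0 : P ≠ 0 := hP.ne'
  have hP2 : (0:ℝ) < P ^ 2 := by positivity
  obtain ⟨ha₁p, ha₁1⟩ := ha₁0
  obtain ⟨ha₂p, ha₂1⟩ := ha₂0
  -- eventual positivity / bounds of α₁, α₂
  have hpos₁ : ∀ᶠ t : ℝ in atTop, 0 < α₁ t ∧ α₁ t ≤ a₁0 := by
    filter_upwards [eventually_ge_atTop t₁0] with t ht
    exact ⟨(hbij₁.mapsTo ht).1, (hbij₁.mapsTo ht).2⟩
  have hpos₂ : ∀ᶠ t : ℝ in atTop, 0 < α₂ t ∧ α₂ t ≤ a₂0 := by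
    filter_upwards [eventually_ge_atTop t₂0] with t ht
    exact ⟨(hbij₂.mapsTo ht).1, (hbij₂.mapsTo ht).2⟩
  have hE₁ := logE n α₁ (hpos₁.mono fun t h => h.1) hasymp₁
  have hE₂raw := logE n α₂ (hpos₂.mono fun t h => h.1) hasymp₂
  -- log α₁ → -∞
  have hlogb : Tendsto (fun t : ℝ => n * Real.log t - t) atTop atBot := by
    have h := tendsto_neg_atTop_atBot.comp (sub_log_atTop n)
    refine h.congr fun t => by simp [Function.comp]
  have hlogα₁ : Tendsto (fun t : ℝ => Real.log (α₁ t)) atTop atBot := by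
    have h := hE₁.add_atBot hlogb
    simpa using h
  -- t₂f → ∞
  have ht2top : Tendsto t₂f atTop atTop := by
    rw [tendsto_atTop]
    intro M
    set M' := max M t₂0 with hM'
    have hcomp : IsCompact (α₂ '' Set.Icc t₂0 M') :=
      isCompact_Icc.image_of_continuousOn (hcont₂.mono Set.Icc_subset_Ici_self)
    have hne : (α₂ '' Set.Icc t₂0 M').Nonempty :=
      ⟨α₂ t₂0, Set.mem_image_of_mem _ (Set.left_mem_Icc.2 (le_max_right M t₂0))⟩
    obtain ⟨x, hx, hxc⟩ := hcomp.sInf_mem hne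
    have hcpos : 0 < sInf (α₂ '' Set.Icc t₂0 M') := by
      rw [← hxc]
      exact (hbij₂.mapsTo (Set.Icc_subset_Ici_self hx)).1
    have hlt : ∀ᶠ t₁ in atTop,
        P ^ 2 * Real.log (α₁ t₁) < Real.log (sInf (α₂ '' Set.Icc t₂0 M')) :=
      (hlogα₁.const_mul_atBot hP2).eventually_lt_atBot _
    filter_upwards [ht₂f, hlt] with t₁ hmem hlt1
    obtain ⟨hmem2, hcon⟩ := hmem
    by_contra h
    push_neg at h
    have hIcc : t₂f t₁ ∈ Set.Icc t₂0 M' := ⟨hmem2, le_trans h.le (le_max_left M t₂0)⟩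
    have h1 : sInf (α₂ '' Set.Icc t₂0 M') ≤ α₂ (t₂f t₁) :=
      csInf_le hcomp.bddBelow (Set.mem_image_of_mem _ hIcc)
    have h2 : α₂ (t₂f t₁) < sInf (α₂ '' Set.Icc t₂0 M') := by
      have hαpos : 0 < α₂ (t₂f t₁) := (hbij₂.mapsTo hmem2).1
      have := Real.exp_lt_exp.2 (hcon ▸ hlt1)
      rwa [Real.exp_log hαpos, Real.exp_log hcpos] at this
    linarith
  have hE₂ : Tendsto (fun t₁ => Real.log (α₂ (t₂f t₁))
      - (n * Real.log (t₂f t₁) - t₂f t₁)) atTop (nhds 0) := hE₂raw.comp ht2top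
  have hL1div := Ldiv n α₁ hE₁
  have hL2div : Tendsto (fun t₁ => -Real.log (α₂ (t₂f t₁)) / t₂f t₁) atTop (nhds 1) :=
    (Ldiv n α₂ hE₂raw).comp ht2top
  -- eventual positivity of L₁, L₂, t's
  have hL1pos : ∀ᶠ t : ℝ in atTop, 0 < -Real.log (α₁ t) := by
    filter_upwards [hpos₁] with t ⟨h0, hle⟩
    have h1 : Real.log (α₁ t) ≤ Real.log a₁0 := Real.log_le_log h0 hle
    have h2 : Real.log a₁0 < 0 := Real.log_neg ha₁p ha₁1
    linarith
  have ht₂pos : ∀ᶠ t₁ : ℝ in atTop, 0 < t₂f t₁ := by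
    filter_upwards [ht₂f] with t₁ h
    exact lt_of_lt_of_le ht₂0 h.1
  have hL2pos : ∀ᶠ t₁ : ℝ in atTop, 0 < -Real.log (α₂ (t₂f t₁)) := by
    filter_upwards [ht₂f, hL1pos] with t₁ h hL1
    rw [h.2]
    nlinarith
  -- ratio t₂/t₁ → P²
  have hrr : Tendsto (fun t₁ => t₂f t₁ / t₁) atTop (nhds (P ^ 2)) := by
    have h := (hL2div.inv₀ one_ne_zero).mul
      ((tendsto_const_nhds (x := P ^ 2) (f := atTop)).mul hL1div)
    rw [show ((1:ℝ)⁻¹ * (P ^ 2 * 1)) = P ^ 2 by norm_num] at h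
    refine h.congr' ?_
    filter_upwards [eventually_gt_atTop 0, ht₂pos, hL1pos, ht₂f] with t₁ ht1 ht2 hL1 hcon
    rw [hcon.2]
    have hl : Real.log (α₁ t₁) ≠ 0 := by intro h; rw [h] at hL1; simp at hL1
    field_simp
  have hs : Tendsto (fun t₁ => Real.sqrt (t₂f t₁ / t₁)) atTop (nhds P) := by
    have h := (Real.continuous_sqrt.tendsto (P ^ 2)).comp hrr
    rw [Real.sqrt_sq hP.le] at h
    exact h
  have hc : Tendsto (fun t₁ => Real.log (t₂f t₁) - Real.log t₁) atTop
      (nhds (Real.log (P ^ 2))) := by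
    have h := (Real.continuousAt_log hP2.ne').tendsto.comp hrr
    refine h.congr' ?_
    filter_upwards [eventually_gt_atTop 0, ht₂pos] with t₁ ht1 ht2
    simp [Function.comp, Real.log_div ht2.ne' ht1.ne']
  have hd₁ : Tendsto (fun t₁ => Real.log (-Real.log (α₁ t₁)) - Real.log t₁) atTop
      (nhds 0) := by
    have h := (Real.continuousAt_log one_ne_zero).tendsto.comp hL1div
    rw [Real.log_one] at h
    refine h.congr' ?_
    filter_upwards [eventually_gt_atTop 0, hL1pos] with t₁ ht1 hL1
    simp [Function.comp, Real.log_div hL1.ne' ht1.ne']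
  have hd₂ : Tendsto (fun t₁ => Real.log (-Real.log (α₂ (t₂f t₁))) - Real.log (t₂f t₁))
      atTop (nhds 0) := by
    have h := (Real.continuousAt_log one_ne_zero).tendsto.comp hL2div
    rw [Real.log_one] at h
    refine h.congr' ?_
    filter_upwards [ht₂pos, hL2pos] with t₁ ht2 hL2
    simp [Function.comp, Real.log_div hL2.ne' ht2.ne']
  -- the w-quantity
  have hw : Tendsto (fun t₁ => n * (Real.log (t₂f t₁) - Real.log t₁)
      + (Real.log (α₂ (t₂f t₁)) - (n * Real.log (t₂f t₁) - t₂f t₁))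
      - P ^ 2 * (Real.log (α₁ t₁) - (n * Real.log t₁ - t₁))) atTop
      (nhds (n * Real.log (P ^ 2))) := by
    have h := ((hc.const_mul n).add hE₂).sub (hE₁.const_mul (P ^ 2))
    simpa using h
  -- the four pieces of Φ
  have hA : Tendsto (fun t₁ => n * (P ^ 2 - 1) * (n * (1 - P ^ 2) * ((Real.log t₁) ^ 2 / t₁)
      + Real.log t₁ / t₁ * (n * (Real.log (t₂f t₁) - Real.log t₁)
      + (Real.log (α₂ (t₂f t₁)) - (n * Real.log (t₂f t₁) - t₂f t₁))
      - P ^ 2 * (Real.log (α₁ t₁) - (n * Real.log t₁ - t₁))))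
      / (2 * P * (Real.sqrt (t₂f t₁ / t₁) + P) ^ 2)) atTop (nhds 0) := by
    have hnum := ((aux_sq_log_div.const_mul (n * (1 - P ^ 2))).add
      (aux_log_div.mul hw)).const_mul (n * (P ^ 2 - 1))
    have hden := ((hs.add (tendsto_const_nhds (x := P))).pow 2).const_mul (2 * P)
    have h := hnum.div hden (by positivity)
    convert h using 2 <;> simp
  have hB : Tendsto (fun t₁ => (n * (Real.log (t₂f t₁) - Real.log t₁)
      + (Real.log (α₂ (t₂f t₁)) - (n * Real.log (t₂f t₁) - t₂f t₁))
      - P ^ 2 * (Real.log (α₁ t₁) - (n * Real.log t₁ - t₁)))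
      / (Real.sqrt (t₂f t₁ / t₁) + P)) atTop (nhds (n * Real.log (P ^ 2) / (P + P))) :=
    hw.div (hs.add tendsto_const_nhds) (by positivity)
  have hC : Tendsto (fun t₁ => P * (Real.log (α₁ t₁) - (n * Real.log t₁ - t₁))) atTop
      (nhds 0) := by
    have h := hE₁.const_mul P
    simpa using h
  have hD : Tendsto (fun t₁ => n / 2 * (P * (Real.log (-Real.log (α₁ t₁)) - Real.log t₁)
      + ((Real.log (t₂f t₁) - Real.log t₁)
        + (Real.log (-Real.log (α₂ (t₂f t₁))) - Real.log (t₂f t₁))) / P)) atTop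
      (nhds (n / 2 * (Real.log (P ^ 2) / P))) := by
    have h := ((hd₁.const_mul P).add ((hc.add hd₂).div_const P)).const_mul (n / 2)
    simpa using h
  have hΦ := ((hA.add hB).add hC).sub hD
  have hZ : (0 : ℝ) + n * Real.log (P ^ 2) / (P + P) + 0 - n / 2 * (Real.log (P ^ 2) / P)
      = 0 := by
    field_simp
    ring
  rw [hZ] at hΦ
  -- conclude
  have hexp : Tendsto (fun t₁ => Real.exp ((fun t₁ => n * (P ^ 2 - 1) * (n * (1 - P ^ 2) * ((Real.log t₁) ^ 2 / t₁)
      + Real.log t₁ / t₁ * (n * (Real.log (t₂f t₁) - Real.log t₁)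
      + (Real.log (α₂ (t₂f t₁)) - (n * Real.log (t₂f t₁) - t₂f t₁))
      - P ^ 2 * (Real.log (α₁ t₁) - (n * Real.log t₁ - t₁))))
      / (2 * P * (Real.sqrt (t₂f t₁ / t₁) + P) ^ 2)
      + (n * (Real.log (t₂f t₁) - Real.log t₁)
      + (Real.log (α₂ (t₂f t₁)) - (n * Real.log (t₂f t₁) - t₂f t₁))
      - P ^ 2 * (Real.log (α₁ t₁) - (n * Real.log t₁ - t₁)))
      / (Real.sqrt (t₂f t₁ / t₁) + P)
      + P * (Real.log (α₁ t₁) - (n * Real.log t₁ - t₁))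
      - n / 2 * (P * (Real.log (-Real.log (α₁ t₁)) - Real.log t₁)
      + ((Real.log (t₂f t₁) - Real.log t₁)
        + (Real.log (-Real.log (α₂ (t₂f t₁))) - Real.log (t₂f t₁))) / P)) t₁)) atTop
      (nhds 1) := by
    have h := (Real.continuous_exp.tendsto 0).comp hΦ
    rw [Real.exp_zero] at h
    exact h
  refine hexp.congr' ?_
  filter_upwards [hpos₁, ht₂f, eventually_gt_atTop 0, hL1pos, ht₂pos, hL2pos] with
    t₁ hα₁ hcon ht1 hL1 ht2 hL2
  obtain ⟨hα₁p, _⟩ := hα₁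
  -- abbreviations per point
  have hsP : Real.sqrt (t₂f t₁ / t₁) + P ≠ 0 := by positivity
  have hssq : Real.sqrt (t₂f t₁ / t₁) ^ 2 = t₂f t₁ / t₁ :=
    Real.sq_sqrt (by positivity)
  have hconk : t₂f t₁ - n * Real.log (t₂f t₁)
      - (Real.log (α₂ (t₂f t₁)) - (n * Real.log (t₂f t₁) - t₂f t₁))
      = P ^ 2 * (t₁ - n * Real.log t₁ - (Real.log (α₁ t₁) - (n * Real.log t₁ - t₁))) := by
    linear_combination -hcon.2
  have hk := key_identity n P t₁ (t₂f t₁) (Real.sqrt (t₂f t₁ / t₁))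
    (Real.log (α₁ t₁) - (n * Real.log t₁ - t₁))
    (Real.log (α₂ (t₂f t₁)) - (n * Real.log (t₂f t₁) - t₂f t₁))
    (Real.log t₁) (Real.log (t₂f t₁))
    (Real.log (-Real.log (α₁ t₁))) (Real.log (-Real.log (α₂ (t₂f t₁))))
    hP0 ht1 hsP hssq hconk
  have hsq : Real.sqrt (t₁ * t₂f t₁) = t₁ * Real.sqrt (t₂f t₁ / t₁) := by
    have heq : t₁ * t₂f t₁ = t₁ ^ 2 * (t₂f t₁ / t₁) := by
      field_simp
    rw [heq, Real.sqrt_mul (sq_nonneg t₁), Real.sqrt_sq ht1.le]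
  -- rewrite the rpow's
  have hApos : (0:ℝ) < (-Real.log (α₁ t₁)) ^ P := Real.rpow_pos_of_pos hL1 P
  have hBpos : (0:ℝ) < (-Real.log (α₂ (t₂f t₁))) ^ (1 / P) := Real.rpow_pos_of_pos hL2 _
  rw [Real.rpow_def_of_pos hα₁p, Real.rpow_def_of_pos (mul_pos hApos hBpos),
    Real.log_mul hApos.ne' hBpos.ne', Real.log_rpow hL1, Real.log_rpow hL2,
    ← Real.exp_add, ← Real.exp_sub]
  congr 1
  linear_combination -hk - hsq
end

section
/- Let c ∈ (0,1), let ρ satisfy c < ρ < 1/c, and let δ ≥ −1/2 be real. For λ > 0 define I₂(λ) := ∫₁^∞ ∫₁^∞ e^{−λ(t₁² − 2cρ t₁ t₂ + ρ² t₂²)} · (t₁ t₂)^{δ + 1/2} dt₁ dt₂. Then 4 λ² ρ (ρ−c)(1−cρ) · e^{λ(ρ² − 2cρ + 1)} · I₂(λ) → 1 as λ → +∞. -/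
open Real Filter MeasureTheory

lemma my_shift (g : ℝ → ℝ) : ∫ x in Set.Ioi (0:ℝ), g (1 + x) = ∫ t in Set.Ioi (1:ℝ), g t := by
  have h := (measurePreserving_add_right (volume : Measure ℝ) 1).setIntegral_preimage_emb
      (MeasurableEquiv.addRight (1:ℝ)).measurableEmbedding g (Set.Ioi (1:ℝ))
  have hs : (· + (1:ℝ)) ⁻¹' Set.Ioi (1:ℝ) = Set.Ioi 0 := by ext x; simp
  rw [hs] at h
  simp_rw [add_comm]
  exact h

lemma my_div_tendsto (r : ℝ) : Filter.Tendsto (fun lam : ℝ => r / lam) Filter.atTop (nhds 0) := by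
  simpa [div_eq_mul_inv] using tendsto_inv_atTop_zero.const_mul r

lemma my_sub (g : ℝ → ℝ) {lam : ℝ} (hlam : 0 < lam) :
    ∫ t in Set.Ioi (1:ℝ), g t = lam⁻¹ * ∫ x in Set.Ioi (0:ℝ), g (1 + x / lam) := by
  have h2 : ∀ x : ℝ, g (1 + x / lam) = (fun y => g (1 + y)) (x * lam⁻¹) := by
    intro x; simp [div_eq_mul_inv]
  simp_rw [h2]
  rw [integral_comp_mul_right_Ioi (fun y => g (1 + y)) 0 (inv_pos.mpr hlam), zero_mul,
    my_shift, smul_eq_mul, inv_inv, ← mul_assoc, inv_mul_cancel₀ hlam.ne', one_mul]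

lemma my_exp_int {a : ℝ} (ha : 0 < a) : ∫ x in Set.Ioi (0:ℝ), exp (-(a*x)) = a⁻¹ := by
  have : ∀ x : ℝ, exp (-(a*x)) = (fun t => exp (-t)) (x * a) := by intro x; simp [mul_comm]
  simp_rw [this]
  rw [integral_comp_mul_right_Ioi (fun t => exp (-t)) 0 ha, zero_mul, integral_exp_neg_Ioi,
    smul_eq_mul]
  simp

lemma my_one_var_int {a p : ℝ} (ha : 0 < a) (hp : 0 ≤ p) :
    IntegrableOn (fun x => exp (-(a*x)) * (1+x)^p) (Set.Ioi (0:ℝ)) := by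
  have hbig : IntegrableOn (fun x => 2^p * (exp (-(a*x)) + exp (-(a*x)) * x^p)) (Set.Ioi (0:ℝ)) := by
    apply Integrable.const_mul
    apply Integrable.add
    · have := exp_neg_integrableOn_Ioi 0 ha
      simp only [neg_mul] at this
      exact this
    · have := integrableOn_rpow_mul_exp_neg_mul_rpow (p := 1) (s := p) (b := a)
        (by linarith) one_pos ha
      simp only [rpow_one] at this
      exact this.congr_fun (fun x _ => by ring_nf) measurableSet_Ioi
  apply hbig.mono' ?_ ?_
  · apply Measurable.aestronglyMeasurable
    fun_prop
  · filter_upwards [ae_restrict_mem measurableSet_Ioi] with x hx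
    have hx0 : (0:ℝ) < x := hx
    have h1 : (1+x)^p ≤ 2^p * (1 + x^p) := by
      calc (1+x)^p ≤ (2 * max 1 x)^p := by
            apply rpow_le_rpow (by linarith) ?_ hp
            have := le_max_left (1:ℝ) x; have := le_max_right (1:ℝ) x; linarith
        _ = 2^p * (max 1 x)^p := mul_rpow (by norm_num) (le_max_of_le_left zero_le_one)
        _ ≤ 2^p * (1 + x^p) := by
            apply mul_le_mul_of_nonneg_left ?_ (rpow_nonneg (by norm_num) p)
            rcases le_total x 1 with h | h
            · rw [max_eq_left h, one_rpow]
              linarith [rpow_nonneg hx0.le p]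
            · rw [max_eq_right h]
              linarith [one_rpow p ▸ rpow_le_rpow zero_le_one h hp, rpow_nonneg hx0.le p]
    have he : (0:ℝ) < exp (-(a*x)) := exp_pos _
    have hr : (0:ℝ) ≤ (1+x)^p := rpow_nonneg (by linarith) p
    rw [Real.norm_eq_abs, abs_of_nonneg (by positivity)]
    calc exp (-(a*x)) * (1+x)^p ≤ exp (-(a*x)) * (2^p * (1 + x^p)) :=
          mul_le_mul_of_nonneg_left h1 he.le
      _ = 2^p * (exp (-(a*x)) + exp (-(a*x)) * x^p) := by ring
lemma my_transform (c ρ p : ℝ) {lam : ℝ} (hlam : 0 < lam) :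
    lam^2 * exp (lam * (ρ^2 - 2*c*ρ + 1)) *
      (∫ t₁ in Set.Ioi (1:ℝ), ∫ t₂ in Set.Ioi (1:ℝ),
        exp (-lam * (t₁^2 - 2*c*ρ*t₁*t₂ + ρ^2*t₂^2)) * (t₁*t₂)^p)
    = ∫ x in Set.Ioi (0:ℝ), ∫ y in Set.Ioi (0:ℝ),
        exp (-(2*(1-c*ρ)*x)) * exp (-(2*ρ*(ρ-c)*y)) *
          exp (-(x^2 - 2*c*ρ*x*y + ρ^2*y^2)/lam) * ((1+x/lam)*(1+y/lam))^p := by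
  rw [my_sub _ hlam]
  have hinner : ∀ x : ℝ,
      (∫ t₂ in Set.Ioi (1:ℝ),
        exp (-lam * ((1+x/lam)^2 - 2*c*ρ*(1+x/lam)*t₂ + ρ^2*t₂^2)) * ((1+x/lam)*t₂)^p)
      = lam⁻¹ * ∫ y in Set.Ioi (0:ℝ),
        exp (-lam * ((1+x/lam)^2 - 2*c*ρ*(1+x/lam)*(1+y/lam) + ρ^2*(1+y/lam)^2)) *
          ((1+x/lam)*(1+y/lam))^p := fun x => my_sub _ hlam
  simp_rw [hinner]
  rw [integral_const_mul]
  have hE : ∀ X : ℝ, lam^2 * exp (lam * (ρ^2 - 2*c*ρ + 1)) * (lam⁻¹ * (lam⁻¹ * X))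
      = exp (lam * (ρ^2 - 2*c*ρ + 1)) * X := fun X => by field_simp
  rw [hE, ← integral_const_mul]
  apply setIntegral_congr_fun measurableSet_Ioi
  intro x _
  dsimp only
  rw [← integral_const_mul]
  apply setIntegral_congr_fun measurableSet_Ioi
  intro y _
  dsimp only
  have key : lam * (ρ^2 - 2*c*ρ + 1) +
      (-lam * ((1+x/lam)^2 - 2*c*ρ*(1+x/lam)*(1+y/lam) + ρ^2*(1+y/lam)^2))
      = -(2*(1-c*ρ)*x) + (-(2*ρ*(ρ-c)*y) + (-(x^2 - 2*c*ρ*x*y + ρ^2*y^2)/lam)) := by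
    field_simp
    ring
  calc exp (lam * (ρ^2 - 2*c*ρ + 1)) *
        (exp (-lam * ((1+x/lam)^2 - 2*c*ρ*(1+x/lam)*(1+y/lam) + ρ^2*(1+y/lam)^2)) *
          ((1+x/lam)*(1+y/lam))^p)
      = exp (lam * (ρ^2 - 2*c*ρ + 1) +
          (-lam * ((1+x/lam)^2 - 2*c*ρ*(1+x/lam)*(1+y/lam) + ρ^2*(1+y/lam)^2))) *
          ((1+x/lam)*(1+y/lam))^p := by
        rw [exp_add]; ring
    _ = exp (-(2*(1-c*ρ)*x)) * exp (-(2*ρ*(ρ-c)*y)) *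
          exp (-(x^2 - 2*c*ρ*x*y + ρ^2*y^2)/lam) * ((1+x/lam)*(1+y/lam))^p := by
        rw [key, exp_add, exp_add]
        ring

/-- For `c ∈ (0,1)`, `c < ρ < 1/c`, real `δ ≥ -1/2`, with
`I₂(λ) := ∫₁^∞∫₁^∞ e^(-λ(t₁²-2cρt₁t₂+ρ²t₂²)) (t₁t₂)^(δ+1/2) dt₁ dt₂`, one has
`4λ²ρ(ρ-c)(1-cρ) e^(λ(ρ²-2cρ+1)) I₂(λ) → 1` as `λ → +∞`. -/
theorem laplace_double_integral_asymptotic (c ρ δ : ℝ) (hc : c ∈ Set.Ioo (0 : ℝ) 1)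
    (hρ₁ : c < ρ) (hρ₂ : ρ < 1 / c) (hδ : -1/2 ≤ δ) :
    Tendsto
      (fun lam : ℝ =>
        4 * lam ^ 2 * ρ * (ρ - c) * (1 - c * ρ) * Real.exp (lam * (ρ ^ 2 - 2 * c * ρ + 1)) *
          ∫ t₁ in Set.Ioi (1 : ℝ), ∫ t₂ in Set.Ioi (1 : ℝ),
            Real.exp (-lam * (t₁ ^ 2 - 2 * c * ρ * t₁ * t₂ + ρ ^ 2 * t₂ ^ 2)) *
              (t₁ * t₂) ^ (δ + 1/2))
      atTop (nhds 1) := by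
  obtain ⟨hc0, hc1⟩ := hc
  have hcρ : c * ρ < 1 := by
    have h := (lt_div_iff₀ hc0).mp hρ₂
    linarith [h, mul_comm ρ c ▸ h]
  set p : ℝ := δ + 1/2 with hpdef
  have hp : 0 ≤ p := by simp only [hpdef]; linarith
  set a : ℝ := 2*(1-c*ρ) with hadef
  set b : ℝ := 2*ρ*(ρ-c) with hbdef
  have ha : 0 < a := by simp only [hadef]; nlinarith
  have hb : 0 < b := by simp only [hbdef]; nlinarith
  have hρ0 : 0 < ρ := hc0.trans hρ₁
  -- the rescaled integrand on the product space
  set F : ℝ → ℝ × ℝ → ℝ := fun lam z =>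
    exp (-(a*z.1)) * exp (-(b*z.2)) *
      exp (-(z.1^2 - 2*c*ρ*z.1*z.2 + ρ^2*z.2^2)/lam) * ((1+z.1/lam)*(1+z.2/lam))^p with hFdef
  set D : ℝ × ℝ → ℝ := fun z =>
    (exp (-(a*z.1)) * (1+z.1)^p) * (exp (-(b*z.2)) * (1+z.2)^p) with hDdef
  set μ2 : Measure (ℝ × ℝ) :=
    ((volume : Measure ℝ).restrict (Set.Ioi 0)).prod ((volume : Measure ℝ).restrict (Set.Ioi 0))
    with hμ2def
  have hμ2r : μ2 = ((volume : Measure ℝ).prod volume).restrict (Set.Ioi 0 ×ˢ Set.Ioi 0) :=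
    Measure.prod_restrict _ _
  have hq : ∀ x y : ℝ, 0 ≤ x^2 - 2*c*ρ*x*y + ρ^2*y^2 := by
    intro x y
    nlinarith [sq_nonneg (x - c*ρ*y), mul_nonneg (by nlinarith : (0:ℝ) ≤ 1 - c^2) (sq_nonneg (ρ*y))]
  have hmeasF : ∀ lam : ℝ, AEStronglyMeasurable (F lam) μ2 := by
    intro lam
    apply Measurable.aestronglyMeasurable
    simp only [hFdef]
    fun_prop
  have hD : Integrable D μ2 :=
    (my_one_var_int ha hp).mul_prod (my_one_var_int hb hp)
  have haemem : ∀ᵐ z ∂μ2, z ∈ Set.Ioi (0:ℝ) ×ˢ Set.Ioi (0:ℝ) := by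
    rw [hμ2r]
    exact ae_restrict_mem (measurableSet_Ioi.prod measurableSet_Ioi)
  have hbound : ∀ lam : ℝ, 1 ≤ lam → ∀ z ∈ Set.Ioi (0:ℝ) ×ˢ Set.Ioi (0:ℝ), ‖F lam z‖ ≤ D z := by
    intro lam hlam z hz
    obtain ⟨hx, hy⟩ := hz
    have hx : (0:ℝ) < z.1 := hx
    have hy : (0:ℝ) < z.2 := hy
    have hl : (0:ℝ) < lam := lt_of_lt_of_le one_pos hlam
    have h1x : (0:ℝ) < 1 + z.1/lam := by
      have := div_nonneg hx.le hl.le; linarith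
    have h1y : (0:ℝ) < 1 + z.2/lam := by
      have := div_nonneg hy.le hl.le; linarith
    have hRn : (0:ℝ) ≤ ((1+z.1/lam)*(1+z.2/lam))^p :=
      rpow_nonneg (mul_nonneg h1x.le h1y.le) _
    have h3 : exp (-(z.1^2 - 2*c*ρ*z.1*z.2 + ρ^2*z.2^2)/lam) ≤ 1 := by
      rw [exp_le_one_iff, neg_div]
      have := div_nonneg (hq z.1 z.2) hl.le
      linarith
    have h4 : ((1+z.1/lam)*(1+z.2/lam))^p ≤ (1+z.1)^p * (1+z.2)^p := by
      rw [← mul_rpow (by linarith) (by linarith)]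
      apply rpow_le_rpow (mul_nonneg h1x.le h1y.le) ?_ hp
      have e1 : 1 + z.1/lam ≤ 1 + z.1 := by
        have := div_le_self hx.le hlam; linarith
      have e2 : 1 + z.2/lam ≤ 1 + z.2 := by
        have := div_le_self hy.le hlam; linarith
      apply mul_le_mul e1 e2 h1y.le (by linarith)
    have h5 : exp (-(z.1^2 - 2*c*ρ*z.1*z.2 + ρ^2*z.2^2)/lam) * ((1+z.1/lam)*(1+z.2/lam))^p
        ≤ (1+z.1)^p * (1+z.2)^p := by
      calc exp (-(z.1^2 - 2*c*ρ*z.1*z.2 + ρ^2*z.2^2)/lam) * ((1+z.1/lam)*(1+z.2/lam))^p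
          ≤ 1 * ((1+z.1)^p * (1+z.2)^p) := mul_le_mul h3 h4 hRn zero_le_one
        _ = (1+z.1)^p * (1+z.2)^p := one_mul _
    have hFn : (0:ℝ) ≤ F lam z := by
      simp only [hFdef]
      have := (exp_pos (-(a*z.1))).le
      have := (exp_pos (-(b*z.2))).le
      have := (exp_pos (-(z.1^2 - 2*c*ρ*z.1*z.2 + ρ^2*z.2^2)/lam)).le
      positivity
    rw [Real.norm_eq_abs, abs_of_nonneg hFn]
    simp only [hFdef, hDdef]
    calc exp (-(a*z.1)) * exp (-(b*z.2)) *
          exp (-(z.1^2 - 2*c*ρ*z.1*z.2 + ρ^2*z.2^2)/lam) * ((1+z.1/lam)*(1+z.2/lam))^p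
        = (exp (-(a*z.1)) * exp (-(b*z.2))) *
            (exp (-(z.1^2 - 2*c*ρ*z.1*z.2 + ρ^2*z.2^2)/lam) * ((1+z.1/lam)*(1+z.2/lam))^p) := by
          ring
      _ ≤ (exp (-(a*z.1)) * exp (-(b*z.2))) * ((1+z.1)^p * (1+z.2)^p) := by
          apply mul_le_mul_of_nonneg_left h5 (by positivity)
      _ = (exp (-(a*z.1)) * (1+z.1)^p) * (exp (-(b*z.2)) * (1+z.2)^p) := by ring
  have hFint : ∀ lam : ℝ, 1 ≤ lam → Integrable (F lam) μ2 := by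
    intro lam hlam
    apply hD.mono' (hmeasF lam)
    filter_upwards [haemem] with z hz
    exact hbound lam hlam z hz
  have hlim : ∀ᵐ z ∂μ2, Tendsto (fun lam => F lam z) atTop
      (nhds (exp (-(a*z.1)) * exp (-(b*z.2)))) := by
    filter_upwards [haemem] with z hz
    obtain ⟨hx, hy⟩ := hz
    have hql : Tendsto (fun lam : ℝ => -(z.1^2 - 2*c*ρ*z.1*z.2 + ρ^2*z.2^2)/lam) atTop (nhds 0) :=
      my_div_tendsto _
    have he3 : Tendsto (fun lam : ℝ => exp (-(z.1^2 - 2*c*ρ*z.1*z.2 + ρ^2*z.2^2)/lam)) atTop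
        (nhds 1) := by
      simpa [Function.comp_def] using (Real.continuous_exp.tendsto 0).comp hql
    have h1x : Tendsto (fun lam : ℝ => 1 + z.1/lam) atTop (nhds 1) := by
      simpa using tendsto_const_nhds.add (my_div_tendsto z.1)
    have h1y : Tendsto (fun lam : ℝ => 1 + z.2/lam) atTop (nhds 1) := by
      simpa using tendsto_const_nhds.add (my_div_tendsto z.2)
    have hbase : Tendsto (fun lam : ℝ => (1+z.1/lam)*(1+z.2/lam)) atTop (nhds 1) := by
      simpa using h1x.mul h1y
    have hR : Tendsto (fun lam : ℝ => ((1+z.1/lam)*(1+z.2/lam))^p) atTop (nhds 1) := by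
      have hcont : ContinuousAt (fun t : ℝ => t ^ p) 1 :=
        Real.continuousAt_rpow_const 1 p (Or.inl one_ne_zero)
      simpa [Real.one_rpow, Function.comp_def] using hcont.tendsto.comp hbase
    simp only [hFdef]
    simpa using ((tendsto_const_nhds.mul he3).mul hR :
      Tendsto (fun lam : ℝ => exp (-(a*z.1)) * exp (-(b*z.2)) *
        exp (-(z.1^2 - 2*c*ρ*z.1*z.2 + ρ^2*z.2^2)/lam) * ((1+z.1/lam)*(1+z.2/lam))^p) atTop
        (nhds (exp (-(a*z.1)) * exp (-(b*z.2)) * 1 * 1)))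
  have htend : Tendsto (fun lam : ℝ => ∫ z, F lam z ∂μ2) atTop
      (nhds (∫ z, exp (-(a*z.1)) * exp (-(b*z.2)) ∂μ2)) := by
    apply tendsto_integral_filter_of_dominated_convergence D
    · exact Eventually.of_forall hmeasF
    · filter_upwards [eventually_ge_atTop 1] with lam hlam
      filter_upwards [haemem] with z hz
      exact hbound lam hlam z hz
    · exact hD
    · exact hlim
  have hval : (∫ z, exp (-(a*z.1)) * exp (-(b*z.2)) ∂μ2) = a⁻¹ * b⁻¹ := by
    rw [hμ2def]
    rw [integral_prod_mul (fun x => exp (-(a*x))) (fun y => exp (-(b*y))), my_exp_int ha,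
      my_exp_int hb]
  rw [hval] at htend
  have hfinal := htend.const_mul (a*b)
  have hone : (a*b) * (a⁻¹ * b⁻¹) = 1 := by field_simp
  rw [hone] at hfinal
  apply hfinal.congr'
  filter_upwards [eventually_ge_atTop 1] with lam hlam
  have hl : (0:ℝ) < lam := lt_of_lt_of_le one_pos hlam
  have htr := my_transform c ρ p hl
  have hfub : (∫ x in Set.Ioi (0:ℝ), ∫ y in Set.Ioi (0:ℝ),
      exp (-(2*(1-c*ρ)*x)) * exp (-(2*ρ*(ρ-c)*y)) *
        exp (-(x^2 - 2*c*ρ*x*y + ρ^2*y^2)/lam) * ((1+x/lam)*(1+y/lam))^p)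
      = ∫ z, F lam z ∂μ2 := by
    rw [hμ2def]
    exact integral_integral (hFint lam hlam)
  calc (a*b) * (∫ z, F lam z ∂μ2)
      = (a*b) * (lam^2 * exp (lam * (ρ^2 - 2*c*ρ + 1)) *
          (∫ t₁ in Set.Ioi (1:ℝ), ∫ t₂ in Set.Ioi (1:ℝ),
            exp (-lam * (t₁^2 - 2*c*ρ*t₁*t₂ + ρ^2*t₂^2)) * (t₁*t₂)^p)) := by
        rw [htr, hfub]
    _ = 4 * lam ^ 2 * ρ * (ρ - c) * (1 - c * ρ) * Real.exp (lam * (ρ ^ 2 - 2 * c * ρ + 1)) *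
          ∫ t₁ in Set.Ioi (1 : ℝ), ∫ t₂ in Set.Ioi (1 : ℝ),
            Real.exp (-lam * (t₁ ^ 2 - 2 * c * ρ * t₁ * t₂ + ρ ^ 2 * t₂ ^ 2)) *
              (t₁ * t₂) ^ (δ + 1/2) := by
        simp only [hadef, hbdef, hpdef]
        ring
end

section
/- Let c ∈ (0,1) and let ρ satisfy c < ρ < 1/c. Define S(t₁, t₂) := t₁² − 2cρ t₁ t₂ + ρ² t₂², and for ε > 0 let D_ε := { (t₁, t₂) : t₁ ≥ 1, t₂ ≥ 1, max(t₁ − 1, ρ(t₂ − 1)) ≥ ε }. If 0 < ε < min(ρ/c − 1, 1/c − ρ), then the minimum of S over D_ε is attained and equals min( (1−c²)/c² , (ρ² − 2cρ + 1) + ε·(2·min(ρ−c, 1−cρ) + ε) ). -/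
open Real

set_option maxHeartbeats 1000000 in
/-- For `c ∈ (0,1)`, `c < ρ < 1/c`, `S(t₁,t₂) := t₁² - 2cρt₁t₂ + ρ²t₂²`,
`D_ε := {(t₁,t₂) : t₁ ≥ 1, t₂ ≥ 1, max(t₁-1, ρ(t₂-1)) ≥ ε}`, and
`0 < ε < min(ρ/c - 1, 1/c - ρ)`, the minimum of `S` over `D_ε` is attained and equals
`min((1-c²)/c², (ρ²-2cρ+1) + ε(2 min(ρ-c, 1-cρ) + ε))`. -/
theorem min_S_on_D_eps (c ρ ε : ℝ) (hc : c ∈ Set.Ioo (0 : ℝ) 1)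
    (hρ₁ : c < ρ) (hρ₂ : ρ < 1 / c)
    (hε : 0 < ε) (hε' : ε < min (ρ / c - 1) (1 / c - ρ)) :
    IsLeast
      ((fun p : ℝ × ℝ => p.1 ^ 2 - 2 * c * ρ * p.1 * p.2 + ρ ^ 2 * p.2 ^ 2) ''
        {p : ℝ × ℝ | 1 ≤ p.1 ∧ 1 ≤ p.2 ∧ ε ≤ max (p.1 - 1) (ρ * (p.2 - 1))})
      (min ((1 - c ^ 2) / c ^ 2)
        ((ρ ^ 2 - 2 * c * ρ + 1) + ε * (2 * min (ρ - c) (1 - c * ρ) + ε))) := by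
  obtain ⟨hc0, hc1⟩ := hc
  have hρ0 : 0 < ρ := lt_trans hc0 hρ₁
  have hcρ : c * ρ < 1 := by
    have := (lt_div_iff₀ hc0).mp hρ₂; linarith [this]
  have hε1 : ε < ρ / c - 1 := lt_of_lt_of_le hε' (min_le_left _ _)
  have hε2 : ε < 1 / c - ρ := lt_of_lt_of_le hε' (min_le_right _ _)
  have hkey : c * (1 + ε) < ρ := by
    have h := mul_lt_mul_of_pos_left hε1 hc0
    have : c * (ρ / c) = ρ := by field_simp
    nlinarith
  constructor
  · -- membership: the min value is attained
    rcases le_total ((1 - c ^ 2) / c ^ 2)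
        ((ρ ^ 2 - 2 * c * ρ + 1) + ε * (2 * min (ρ - c) (1 - c * ρ) + ε)) with hAB | hAB
    · refine ⟨(1, 1 / (c * ρ)), ⟨le_refl 1, ?_, ?_⟩, ?_⟩
      · rw [le_div_iff₀ (by positivity)]; linarith
      · refine le_trans ?_ (le_max_right _ _)
        have : ρ * (1 / (c * ρ) - 1) = 1 / c - ρ := by field_simp
        rw [this]; linarith
      · rw [min_eq_left hAB]
        have hc0' : c ≠ 0 := ne_of_gt hc0
        have hρ0' : ρ ≠ 0 := ne_of_gt hρ0
        field_simp
        ring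
    · rw [min_eq_right hAB]
      rcases le_total (ρ - c) (1 - c * ρ) with hm | hm
      · refine ⟨(1, 1 + ε / ρ), ⟨le_refl 1, by
          have := div_pos hε hρ0; simp only []; linarith, ?_⟩, ?_⟩
        · refine le_trans ?_ (le_max_right _ _)
          have : ρ * (1 + ε / ρ - 1) = ε := by field_simp; ring
          rw [this]
        · rw [min_eq_left hm]
          have hρ0' : ρ ≠ 0 := ne_of_gt hρ0
          field_simp
          ring
      · refine ⟨(1 + ε, 1), ⟨by show (1:ℝ) ≤ 1 + ε; linarith, le_refl 1, ?_⟩, ?_⟩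
        · refine le_trans ?_ (le_max_left _ _)
          norm_num
        · rw [min_eq_right hm]
          ring
  · -- lower bound
    rintro y ⟨p, ⟨h1, h2, h3⟩, rfl⟩
    simp only
    by_cases hv : 1 / c ≤ ρ * p.2
    · refine le_trans (min_le_left _ _) ?_
      have hw : 1 ≤ c * (ρ * p.2) := by
        rw [div_le_iff₀ hc0] at hv; linarith [hv]
      rw [div_le_iff₀ (by positivity : (0:ℝ) < c ^ 2)]
      nlinarith [mul_nonneg (sq_nonneg c) (sq_nonneg (p.1 - c * ρ * p.2)),
        mul_nonneg (mul_nonneg (sub_nonneg.mpr hw)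
          (by nlinarith : (0:ℝ) ≤ c * (ρ * p.2) + 1))
          (by nlinarith : (0:ℝ) ≤ 1 - c ^ 2)]
    · push_neg at hv
      have hcv : c * ρ * p.2 < 1 := by
        have := (mul_lt_mul_of_pos_left hv hc0)
        have : c * (1 / c) = 1 := by field_simp
        nlinarith [mul_lt_mul_of_pos_left hv hc0]
      refine le_trans (min_le_right _ _) ?_
      rcases le_or_gt ε (p.1 - 1) with hcase | hcase
      · -- t₁ ≥ 1 + ε
        have h₁ : 0 ≤ (p.1 - (1 + ε)) * (p.1 + (1 + ε) - 2 * c * ρ * p.2) := by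
          apply mul_nonneg <;> nlinarith
        have h₂ : 0 ≤ (ρ * (p.2 - 1)) * (ρ * (p.2 + 1) - 2 * c * (1 + ε)) := by
          apply mul_nonneg
          · nlinarith
          · nlinarith
        have hm : min (ρ - c) (1 - c * ρ) ≤ 1 - c * ρ := min_le_right _ _
        nlinarith [h₁, h₂, mul_nonneg hε.le (sub_nonneg.mpr hm)]
      · -- then ρ(t₂ - 1) ≥ ε
        have hcase2 : ε ≤ ρ * (p.2 - 1) := by
          rcases le_max_iff.mp h3 with h | h
          · linarith
          · exact h
        have h₁ : 0 ≤ (p.1 - 1) * (p.1 + 1 - 2 * c * ρ * p.2) := by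
          apply mul_nonneg
          · linarith
          · nlinarith
        have h₂ : 0 ≤ (ρ * p.2 - (ρ + ε)) * (ρ * p.2 + ρ + ε - 2 * c) := by
          apply mul_nonneg
          · nlinarith
          · nlinarith
        have hm : min (ρ - c) (1 - c * ρ) ≤ ρ - c := min_le_left _ _
        nlinarith [h₁, h₂, mul_nonneg hε.le (sub_nonneg.mpr hm)]
end

section
/- Let c ∈ (0,1), ρ > 0, and let δ ≥ −1/2 be real. Then ∫₁^∞ ∫₁^∞ (t₁ t₂)^{δ+1/2} · e^{−(t₁² − 2cρ t₁ t₂ + ρ² t₂²)} dt₁ dt₂ ≤ ρ^{−(δ+3/2)} · ( (2c)^{δ+1/2} √π · Γ(δ+1) / (2(1−c²)^{δ+1}) + 2^{δ−1/2} · Γ(δ/2 + 3/4)² / (2(1−c²)^{δ/2 + 3/4}) ). -/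
open Real MeasureTheory
open Set


lemma my_shift_s14 (g : ℝ → ℝ) (a d : ℝ) :
    ∫ x in Ioi a, g (x - d) = ∫ x in Ioi (a - d), g x := by
  rw [← integral_indicator measurableSet_Ioi, ← integral_indicator measurableSet_Ioi,
    ← integral_sub_right_eq_self (Set.indicator (Ioi (a - d)) g) d]
  congr 1
  ext x
  simp only [Set.indicator_apply, mem_Ioi, sub_lt_sub_iff_right]

lemma my_gamma_int {b s : ℝ} (hb : 0 < b) (hs : -1 < s) :
    ∫ x in Ioi (0:ℝ), x ^ s * Real.exp (-b * x ^ 2) =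
      b ^ (-(s + 1) / 2) * (1 / 2) * Real.Gamma ((s + 1) / 2) := by
  rw [← integral_rpow_mul_exp_neg_mul_rpow two_pos hs hb]
  refine setIntegral_congr_fun measurableSet_Ioi fun x hx => ?_
  rw [Real.rpow_two]

lemma my_gamma_int1 {s : ℝ} (hs : -1 < s) :
    ∫ x in Ioi (0:ℝ), x ^ s * Real.exp (-x ^ 2) = Real.Gamma ((s + 1) / 2) / 2 := by
  have h : ∀ x : ℝ, x ^ s * Real.exp (-x ^ 2) = x ^ s * Real.exp (-1 * x ^ 2) := by
    intro x; rw [neg_one_mul]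
  simp_rw [h]
  rw [my_gamma_int one_pos hs, one_rpow]
  ring

lemma my_g2_integrable {s : ℝ} (hs : -1 < s) :
    Integrable (fun x : ℝ => x ^ s * Real.exp (-x ^ 2)) := by
  have h := integrable_rpow_mul_exp_neg_mul_sq one_pos hs
  simpa [neg_one_mul] using h

lemma my_gauss_shift (r d : ℝ) (hr : 0 < r) :
    ∫ x : ℝ, Real.exp (-(r * x - d) ^ 2) = Real.sqrt π / r := by
  have h1 : ∀ x : ℝ, Real.exp (-(r * x - d) ^ 2)
      = (fun y : ℝ => Real.exp (-(r * y) ^ 2)) (x - d / r) := by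
    intro x
    simp only
    congr 2
    field_simp
  simp_rw [h1]
  rw [integral_sub_right_eq_self (fun y : ℝ => Real.exp (-(r * y) ^ 2)) (d / r)]
  have h2 : ∀ y : ℝ, Real.exp (-(r * y) ^ 2) = Real.exp (-(r ^ 2) * y ^ 2) := by
    intro y; congr 1; ring
  simp_rw [h2]
  rw [integral_gaussian, Real.sqrt_div pi_nonneg, Real.sqrt_sq hr.le]

lemma my_gauss_integrable (r d : ℝ) (hr : 0 < r) :
    Integrable (fun x : ℝ => Real.exp (-(r * x - d) ^ 2)) := by
  have h1 : ∀ x : ℝ, Real.exp (-(r * x - d) ^ 2)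
      = (fun y : ℝ => Real.exp (-(r ^ 2) * y ^ 2)) (x - d / r) := by
    intro x
    simp only
    congr 1
    field_simp
  simp_rw [h1]
  exact (integrable_exp_neg_mul_sq (by positivity)).comp_sub_right (d / r)

lemma my_comp_integrable {s : ℝ} (hs : -1 < s) (r d : ℝ) (hr : 0 < r) :
    Integrable (fun t : ℝ => (r * t - d) ^ s * Real.exp (-(r * t - d) ^ 2)) := by
  have h0 : Integrable (fun y : ℝ => (y - d) ^ s * Real.exp (-(y - d) ^ 2)) :=
    (my_g2_integrable hs).comp_sub_right d
  exact h0.comp_mul_left' hr.ne'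

lemma inner_bound {c ρ μ u : ℝ} (hc0 : 0 < c) (hc1 : c < 1) (hρ : 0 < ρ) (hμ : 0 ≤ μ)
    (hu : 0 < u) :
    ∫ t in Ioi (1:ℝ), (u * t) ^ μ * Real.exp (-(u ^ 2 - 2 * c * ρ * u * t + ρ ^ 2 * t ^ 2)) ≤
      Real.sqrt π * (2 * c) ^ μ / ρ ^ (μ + 1) * (u ^ (2 * μ) * Real.exp (-(1 - c ^ 2) * u ^ 2)) +
      2 ^ μ * (Real.Gamma ((μ + 1) / 2) / 2) / ρ ^ (μ + 1) *
        (u ^ μ * Real.exp (-(1 - c ^ 2) * u ^ 2)) := by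
  have hb : 0 < 1 - c ^ 2 := by nlinarith
  set b : ℝ := 1 - c ^ 2 with hbdef
  set a : ℝ := max 1 (2 * c * u / ρ) with hadef
  have ha1 : (1 : ℝ) ≤ a := le_max_left _ _
  have haρ : 2 * c * u ≤ ρ * a := by
    calc 2 * c * u = ρ * (2 * c * u / ρ) := by field_simp
    _ ≤ ρ * a := by gcongr; exact le_max_right _ _
  have hμ1 : (-1 : ℝ) < μ := by linarith
  -- rewrite integrand
  have hexp : ∀ t : ℝ, Real.exp (-(u ^ 2 - 2 * c * ρ * u * t + ρ ^ 2 * t ^ 2))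
      = Real.exp (-(ρ * t - c * u) ^ 2) * Real.exp (-b * u ^ 2) := by
    intro t; rw [← Real.exp_add]; congr 1; rw [hbdef]; ring
  simp_rw [hexp]
  set C₁ : ℝ := (2 * c * u / ρ) ^ μ * u ^ μ * Real.exp (-b * u ^ 2) with hC1
  set C₂ : ℝ := (2 / ρ) ^ μ * u ^ μ * Real.exp (-b * u ^ 2) with hC2
  have hC1_nonneg : 0 ≤ C₁ := by positivity
  have hC2_nonneg : 0 ≤ C₂ := by positivity
  set h₁ : ℝ → ℝ := fun t => C₁ * Real.exp (-(ρ * t - c * u) ^ 2) with hh1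
  set h₂ : ℝ → ℝ := fun t => C₂ * ((ρ * t - c * u) ^ μ * Real.exp (-(ρ * t - c * u) ^ 2))
    with hh2
  have hint_h₁ : Integrable h₁ := (my_gauss_integrable ρ (c * u) hρ).const_mul C₁
  have hint_h₂ : Integrable h₂ := (my_comp_integrable hμ1 ρ (c * u) hρ).const_mul C₂
  have hfh₁ : ∀ t ∈ Ioc (1 : ℝ) a,
      (u * t) ^ μ * (Real.exp (-(ρ * t - c * u) ^ 2) * Real.exp (-b * u ^ 2)) ≤ h₁ t := by
    intro t ht
    have ht0 : 0 < t := lt_trans one_pos ht.1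
    have htle : t ≤ 2 * c * u / ρ := by
      have := ht.2
      rw [hadef] at this
      exact (le_max_iff.mp this).resolve_left (not_le.mpr ht.1)
    have heq : (u * t) ^ μ * (Real.exp (-(ρ * t - c * u) ^ 2) * Real.exp (-b * u ^ 2))
        = t ^ μ * (u ^ μ * Real.exp (-b * u ^ 2) * Real.exp (-(ρ * t - c * u) ^ 2)) := by
      rw [mul_rpow hu.le ht0.le]; ring
    have heq2 : h₁ t
        = (2 * c * u / ρ) ^ μ * (u ^ μ * Real.exp (-b * u ^ 2) *
            Real.exp (-(ρ * t - c * u) ^ 2)) := by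
      rw [hh1, hC1]; ring
    rw [heq, heq2]
    exact mul_le_mul_of_nonneg_right (rpow_le_rpow ht0.le htle hμ) (by positivity)
  have hfh₂ : ∀ t ∈ Ioi a,
      (u * t) ^ μ * (Real.exp (-(ρ * t - c * u) ^ 2) * Real.exp (-b * u ^ 2)) ≤ h₂ t := by
    intro t ht
    rw [mem_Ioi] at ht
    have ht0 : 0 < t := lt_of_lt_of_le one_pos (le_trans ha1 ht.le)
    have hρt : 2 * c * u < ρ * t := lt_of_le_of_lt haρ (by gcongr)
    have htw : t ≤ 2 / ρ * (ρ * t - c * u) := by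
      rw [div_mul_eq_mul_div, le_div_iff₀ hρ]
      nlinarith
    have heq : (u * t) ^ μ * (Real.exp (-(ρ * t - c * u) ^ 2) * Real.exp (-b * u ^ 2))
        = t ^ μ * (u ^ μ * Real.exp (-b * u ^ 2) * Real.exp (-(ρ * t - c * u) ^ 2)) := by
      rw [mul_rpow hu.le ht0.le]; ring
    have hw0 : 0 < ρ * t - c * u := by nlinarith
    have heq2 : h₂ t = (2 / ρ * (ρ * t - c * u)) ^ μ *
        (u ^ μ * Real.exp (-b * u ^ 2) * Real.exp (-(ρ * t - c * u) ^ 2)) := by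
      rw [hh2, hC2, mul_rpow (by positivity) hw0.le]; ring
    rw [heq, heq2]
    exact mul_le_mul_of_nonneg_right (rpow_le_rpow ht0.le htw hμ) (by positivity)
  -- measurability of the integrand
  have hconts : ∀ s : Set ℝ, s ⊆ Ioi 0 → ContinuousOn
      (fun t => (u * t) ^ μ * (Real.exp (-(ρ * t - c * u) ^ 2) * Real.exp (-b * u ^ 2))) s := by
    intro s hs
    apply ContinuousOn.mul
    · exact (continuousOn_const.mul continuousOn_id).rpow_const (fun t _ => Or.inr hμ)
    · apply Continuous.continuousOn
      exact (Real.continuous_exp.comp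
        (((continuous_const.mul continuous_id).sub continuous_const).pow 2).neg).mul
        continuous_const
  have hIoc_sub : Ioc (1:ℝ) a ⊆ Ioi 0 := fun x hx => lt_trans one_pos hx.1
  have hIoi_sub : Ioi a ⊆ Ioi 0 := fun x hx => lt_of_lt_of_le one_pos (le_trans ha1 (le_of_lt hx))
  have hint_f1 : IntegrableOn
      (fun t => (u * t) ^ μ * (Real.exp (-(ρ * t - c * u) ^ 2) * Real.exp (-b * u ^ 2)))
      (Ioc 1 a) :=
    ((hconts (Icc 1 a) (fun x hx => lt_of_lt_of_le one_pos hx.1)).integrableOn_compact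
      isCompact_Icc).mono_set Ioc_subset_Icc_self
  have hint_f2 : IntegrableOn
      (fun t => (u * t) ^ μ * (Real.exp (-(ρ * t - c * u) ^ 2) * Real.exp (-b * u ^ 2)))
      (Ioi a) := by
    apply Integrable.mono' hint_h₂.integrableOn
      ((hconts (Ioi a) hIoi_sub).aestronglyMeasurable measurableSet_Ioi)
    filter_upwards [ae_restrict_mem measurableSet_Ioi] with t ht
    have ht0 : 0 < t := lt_of_lt_of_le one_pos (ha1.trans (le_of_lt ht))
    rw [Real.norm_eq_abs, abs_of_nonneg (by positivity)]
    exact hfh₂ t ht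
  rw [← Ioc_union_Ioi_eq_Ioi ha1,
    setIntegral_union (Ioc_disjoint_Ioi le_rfl) measurableSet_Ioi hint_f1 hint_f2]
  have e1 : (2 * c * u / ρ) ^ μ = (2 * c) ^ μ * u ^ μ / ρ ^ μ := by
    rw [div_rpow (by positivity) hρ.le, mul_rpow (by positivity) hu.le]
  have e2 : u ^ (2 * μ) = u ^ μ * u ^ μ := by
    rw [show (2:ℝ) * μ = μ + μ by ring, rpow_add hu]
  have e3 : ρ ^ (μ + 1) = ρ ^ μ * ρ := by rw [rpow_add hρ, rpow_one]
  have hρμ : (0:ℝ) < ρ ^ μ := rpow_pos_of_pos hρ μ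
  have e4 : (2 / ρ) ^ μ = 2 ^ μ / ρ ^ μ := by
    rw [div_rpow (by norm_num : (0:ℝ) ≤ 2) hρ.le]
  apply add_le_add
  · calc ∫ t in Ioc (1:ℝ) a,
        (u * t) ^ μ * (Real.exp (-(ρ * t - c * u) ^ 2) * Real.exp (-b * u ^ 2))
        ≤ ∫ t in Ioc (1:ℝ) a, h₁ t :=
          setIntegral_mono_on hint_f1 hint_h₁.integrableOn measurableSet_Ioc hfh₁
      _ ≤ ∫ t : ℝ, h₁ t :=
          setIntegral_le_integral hint_h₁ (ae_of_all _ fun t => by positivity)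
      _ = C₁ * (Real.sqrt π / ρ) := by
          rw [hh1, integral_const_mul, my_gauss_shift ρ (c * u) hρ]
      _ = Real.sqrt π * (2 * c) ^ μ / ρ ^ (μ + 1) *
            (u ^ (2 * μ) * Real.exp (-b * u ^ 2)) := by
          rw [hC1, e1, e2, e3]
          field_simp
  · calc ∫ t in Ioi a,
        (u * t) ^ μ * (Real.exp (-(ρ * t - c * u) ^ 2) * Real.exp (-b * u ^ 2))
        ≤ ∫ t in Ioi a, h₂ t :=
          setIntegral_mono_on hint_f2 hint_h₂.integrableOn measurableSet_Ioi hfh₂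
      _ = C₂ * ∫ t in Ioi a, (ρ * t - c * u) ^ μ * Real.exp (-(ρ * t - c * u) ^ 2) := by
          rw [hh2, integral_const_mul]
      _ = C₂ * (ρ⁻¹ * ∫ x in Ioi (ρ * a - c * u), x ^ μ * Real.exp (-x ^ 2)) := by
          have hcv := integral_comp_mul_left_Ioi
            (fun y => (y - c * u) ^ μ * Real.exp (-(y - c * u) ^ 2)) a hρ
          simp only [smul_eq_mul] at hcv
          have hsh := my_shift_s14 (fun x => x ^ μ * Real.exp (-x ^ 2)) (ρ * a) (c * u)
          rw [hcv, hsh]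
      _ ≤ C₂ * (ρ⁻¹ * (Real.Gamma ((μ + 1) / 2) / 2)) := by
          have hsub : Ioi (ρ * a - c * u) ⊆ Ioi (0:ℝ) :=
            Ioi_subset_Ioi (by nlinarith)
          have hmono : (∫ x in Ioi (ρ * a - c * u), x ^ μ * Real.exp (-x ^ 2))
              ≤ ∫ x in Ioi (0:ℝ), x ^ μ * Real.exp (-x ^ 2) := by
            apply setIntegral_mono_set (my_g2_integrable hμ1).integrableOn ?_
              (HasSubset.Subset.eventuallyLE hsub)
            filter_upwards [ae_restrict_mem measurableSet_Ioi] with x hx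
            exact mul_nonneg (rpow_nonneg (le_of_lt hx) μ) (Real.exp_pos _).le
          rw [my_gamma_int1 hμ1] at hmono
          have : ρ⁻¹ * (∫ x in Ioi (ρ * a - c * u), x ^ μ * Real.exp (-x ^ 2))
              ≤ ρ⁻¹ * (Real.Gamma ((μ + 1) / 2) / 2) := by
            apply mul_le_mul_of_nonneg_left hmono (by positivity)
          exact mul_le_mul_of_nonneg_left this hC2_nonneg
      _ = 2 ^ μ * (Real.Gamma ((μ + 1) / 2) / 2) / ρ ^ (μ + 1) *
            (u ^ μ * Real.exp (-b * u ^ 2)) := by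
          rw [hC2, e4, e3]
          field_simp

/-- For `c ∈ (0,1)`, `ρ > 0`, real `δ ≥ -1/2`,
`∫₁^∞∫₁^∞ (t₁t₂)^(δ+1/2) e^(-(t₁²-2cρt₁t₂+ρ²t₂²)) dt₁ dt₂
  ≤ ρ^(-(δ+3/2)) ((2c)^(δ+1/2)√π Γ(δ+1)/(2(1-c²)^(δ+1)) + 2^(δ-1/2) Γ(δ/2+3/4)²/(2(1-c²)^(δ/2+3/4)))`. -/
theorem double_integral_bound (c ρ δ : ℝ) (hc : c ∈ Set.Ioo (0 : ℝ) 1) (hρ : 0 < ρ)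
    (hδ : -1/2 ≤ δ) :
    (∫ t₁ in Set.Ioi (1 : ℝ), ∫ t₂ in Set.Ioi (1 : ℝ),
        (t₁ * t₂) ^ (δ + 1/2) * Real.exp (-(t₁ ^ 2 - 2 * c * ρ * t₁ * t₂ + ρ ^ 2 * t₂ ^ 2))) ≤
      ρ ^ (-(δ + 3/2)) *
        ((2 * c) ^ (δ + 1/2) * Real.sqrt π * Real.Gamma (δ + 1) / (2 * (1 - c ^ 2) ^ (δ + 1)) +
          2 ^ (δ - 1/2) * (Real.Gamma (δ / 2 + 3/4)) ^ 2 / (2 * (1 - c ^ 2) ^ (δ / 2 + 3/4))) := by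
  obtain ⟨hc0, hc1⟩ := hc
  have hμ : (0:ℝ) ≤ δ + 1/2 := by linarith
  have hb : 0 < 1 - c ^ 2 := by nlinarith
  have hs1 : (-1:ℝ) < 2 * (δ + 1/2) := by linarith
  have hs2 : (-1:ℝ) < δ + 1/2 := by linarith
  have hint1 : IntegrableOn
      (fun u : ℝ => u ^ (2 * (δ + 1/2)) * Real.exp (-(1 - c ^ 2) * u ^ 2)) (Ioi 0) :=
    integrableOn_rpow_mul_exp_neg_mul_sq hb hs1
  have hint2 : IntegrableOn
      (fun u : ℝ => u ^ (δ + 1/2) * Real.exp (-(1 - c ^ 2) * u ^ 2)) (Ioi 0) :=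
    integrableOn_rpow_mul_exp_neg_mul_sq hb hs2
  have hint1' := (hint1.mono_set (Ioi_subset_Ioi zero_le_one)).const_mul
    (Real.sqrt π * (2 * c) ^ (δ + 1/2) / ρ ^ (δ + 1/2 + 1))
  have hint2' := (hint2.mono_set (Ioi_subset_Ioi zero_le_one)).const_mul
    (2 ^ (δ + 1/2) * (Real.Gamma ((δ + 1/2 + 1) / 2) / 2) / ρ ^ (δ + 1/2 + 1))
  have step1 : (∫ t₁ in Set.Ioi (1 : ℝ), ∫ t₂ in Set.Ioi (1 : ℝ),
        (t₁ * t₂) ^ (δ + 1/2) * Real.exp (-(t₁ ^ 2 - 2 * c * ρ * t₁ * t₂ + ρ ^ 2 * t₂ ^ 2))) ≤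
      ∫ u in Ioi (1:ℝ),
        (Real.sqrt π * (2 * c) ^ (δ + 1/2) / ρ ^ (δ + 1/2 + 1) *
          (u ^ (2 * (δ + 1/2)) * Real.exp (-(1 - c ^ 2) * u ^ 2)) +
        2 ^ (δ + 1/2) * (Real.Gamma ((δ + 1/2 + 1) / 2) / 2) / ρ ^ (δ + 1/2 + 1) *
          (u ^ (δ + 1/2) * Real.exp (-(1 - c ^ 2) * u ^ 2))) := by
    apply integral_mono_of_nonneg ?_ (hint1'.add hint2') ?_
    · filter_upwards [ae_restrict_mem measurableSet_Ioi] with u hu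
      apply setIntegral_nonneg measurableSet_Ioi
      intro t ht
      have h1 : (0:ℝ) < u * t := mul_pos (lt_trans one_pos hu) (lt_trans one_pos ht)
      positivity
    · filter_upwards [ae_restrict_mem measurableSet_Ioi] with u hu
      exact inner_bound hc0 hc1 hρ hμ (lt_trans one_pos hu)
  refine le_trans step1 ?_
  rw [integral_add hint1' hint2', integral_const_mul, integral_const_mul]
  have hmono1 : (∫ u in Ioi (1:ℝ), u ^ (2 * (δ + 1/2)) * Real.exp (-(1 - c ^ 2) * u ^ 2))
      ≤ ∫ u in Ioi (0:ℝ), u ^ (2 * (δ + 1/2)) * Real.exp (-(1 - c ^ 2) * u ^ 2) := by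
    apply setIntegral_mono_set hint1 ?_
      (HasSubset.Subset.eventuallyLE (Ioi_subset_Ioi zero_le_one))
    filter_upwards [ae_restrict_mem measurableSet_Ioi] with x hx
    exact mul_nonneg (rpow_nonneg (le_of_lt hx) _) (Real.exp_pos _).le
  have hmono2 : (∫ u in Ioi (1:ℝ), u ^ (δ + 1/2) * Real.exp (-(1 - c ^ 2) * u ^ 2))
      ≤ ∫ u in Ioi (0:ℝ), u ^ (δ + 1/2) * Real.exp (-(1 - c ^ 2) * u ^ 2) := by
    apply setIntegral_mono_set hint2 ?_
      (HasSubset.Subset.eventuallyLE (Ioi_subset_Ioi zero_le_one))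
    filter_upwards [ae_restrict_mem measurableSet_Ioi] with x hx
    exact mul_nonneg (rpow_nonneg (le_of_lt hx) _) (Real.exp_pos _).le
  rw [my_gamma_int hb hs1] at hmono1
  rw [my_gamma_int hb hs2] at hmono2
  have key : Real.sqrt π * (2 * c) ^ (δ + 1/2) / ρ ^ (δ + 1/2 + 1) *
        ((1 - c ^ 2) ^ (-(2 * (δ + 1/2) + 1) / 2) * (1 / 2) *
          Real.Gamma ((2 * (δ + 1/2) + 1) / 2)) +
      2 ^ (δ + 1/2) * (Real.Gamma ((δ + 1/2 + 1) / 2) / 2) / ρ ^ (δ + 1/2 + 1) *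
        ((1 - c ^ 2) ^ (-(δ + 1/2 + 1) / 2) * (1 / 2) *
          Real.Gamma ((δ + 1/2 + 1) / 2)) =
      ρ ^ (-(δ + 3/2)) *
        ((2 * c) ^ (δ + 1/2) * Real.sqrt π * Real.Gamma (δ + 1) / (2 * (1 - c ^ 2) ^ (δ + 1)) +
          2 ^ (δ - 1/2) * (Real.Gamma (δ / 2 + 3/4)) ^ 2 /
            (2 * (1 - c ^ 2) ^ (δ / 2 + 3/4))) := by
    rw [show (2 * (δ + 1/2) + 1) / 2 = δ + 1 by ring,
      show -(2 * (δ + 1/2) + 1) / 2 = -(δ + 1) by ring,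
      show (δ + 1/2 + 1) / 2 = δ / 2 + 3/4 by ring,
      show -(δ + 1/2 + 1) / 2 = -(δ / 2 + 3/4) by ring,
      show δ + 1/2 + 1 = δ + 3/2 by ring,
      show (2:ℝ) ^ (δ + 1/2) = 2 ^ (δ - 1/2) * 2 by
        rw [show δ + 1/2 = δ - 1/2 + 1 by ring, rpow_add_one (by norm_num : (2:ℝ) ≠ 0)],
      Real.rpow_neg hb.le (δ + 1), Real.rpow_neg hb.le (δ / 2 + 3/4),
      Real.rpow_neg hρ.le (δ + 3/2)]
    have h1 : (0:ℝ) < (1 - c ^ 2) ^ (δ + 1) := rpow_pos_of_pos hb _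
    have h2 : (0:ℝ) < (1 - c ^ 2) ^ (δ / 2 + 3/4) := rpow_pos_of_pos hb _
    have h3 : (0:ℝ) < ρ ^ (δ + 3/2) := rpow_pos_of_pos hρ _
    field_simp
  rw [← key]
  have hA0 : (0:ℝ) ≤ Real.sqrt π * (2 * c) ^ (δ + 1/2) / ρ ^ (δ + 1/2 + 1) := by positivity
  have hB0 : (0:ℝ) ≤ 2 ^ (δ + 1/2) * (Real.Gamma ((δ + 1/2 + 1) / 2) / 2) /
      ρ ^ (δ + 1/2 + 1) := by
    have := Real.Gamma_pos_of_pos (show (0:ℝ) < (δ + 1/2 + 1) / 2 by linarith)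
    positivity
  exact add_le_add (mul_le_mul_of_nonneg_left hmono1 hA0)
    (mul_le_mul_of_nonneg_left hmono2 hB0)
end

section
/- Fix a real k ≥ 2 and let T_k(x) := ∫_x^∞ t^{k/2−1} e^{−t/2} / (2^{k/2} Γ(k/2)) dt be the chi-squared tail with k degrees of freedom. Then, as x → +∞, (−ln T_k(x))^{k−2} · ( Γ(k/2) · T_k(x) )^{−2} is asymptotically equivalent to e^{x}, i.e. (−ln T_k(x))^{k−2} · ( Γ(k/2) · T_k(x) )^{−2} · e^{−x} → 1. -/
open Real Filter MeasureTheory Set Topology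

/-- Integral of `exp (-b*t)` over `Ioi a`. -/
lemma expTail_integral {b : ℝ} (hb : 0 < b) (a : ℝ) :
    ∫ t in Set.Ioi a, Real.exp (-b * t) = Real.exp (-b * a) / b := by
  have hderiv : ∀ x ∈ Set.Ici a, HasDerivAt (fun t => -Real.exp (-b * t) / b)
      (Real.exp (-b * x)) x := by
    intro x _
    have h : HasDerivAt (fun t : ℝ => -b * t) (-b) x := by
      simpa using (hasDerivAt_id x).const_mul (-b)
    have h2 := (h.exp.neg.div_const b)
    refine h2.congr_deriv ?_
    simp [hb.ne']
  have htend : Tendsto (fun t => -Real.exp (-b * t) / b) atTop (𝓝 (-0 / b)) := by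
    refine Tendsto.div_const (Tendsto.neg ?_) _
    exact Real.tendsto_exp_atBot.comp (tendsto_id.const_mul_atTop_of_neg (by linarith))
  have := integral_Ioi_of_hasDerivAt_of_nonneg' hderiv
      (fun x _ => (Real.exp_pos _).le) htend
  rw [this]; field_simp; simp

lemma expTail_integrable {b : ℝ} (hb : 0 < b) (a : ℝ) :
    IntegrableOn (fun t : ℝ => Real.exp (-b * t)) (Set.Ioi a) :=
  exp_neg_integrableOn_Ioi a hb

/-- Pointwise exponential bound for the chi-squared integrand. -/
lemma rpow_exp_bound {s : ℝ} (hs : 0 ≤ s) {t : ℝ} (ht : 0 < t) :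
    t ^ s * Real.exp (-t / 2) ≤
      Real.exp (s * Real.log (8 * (s + 1))) * Real.exp (-(3 / 8) * t) := by
  have ha : (0:ℝ) < 8 * (s + 1) := by linarith
  have hlog : Real.log t ≤ Real.log (8 * (s + 1)) + t / (8 * (s + 1)) := by
    have h1 := Real.log_le_sub_one_of_pos (show 0 < t / (8 * (s + 1)) by positivity)
    rw [Real.log_div ht.ne' ha.ne'] at h1
    linarith
  have hst : s * (t / (8 * (s + 1))) ≤ t / 8 := by
    rw [← mul_div_assoc, div_le_div_iff₀ ha (by norm_num : (0:ℝ) < 8)]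
    nlinarith [ht.le]
  have hkey : s * Real.log t + (-t / 2) ≤
      s * Real.log (8 * (s + 1)) + (-(3 / 8) * t) := by
    have := mul_le_mul_of_nonneg_left hlog hs
    nlinarith
  calc t ^ s * Real.exp (-t / 2)
      = Real.exp (s * Real.log t + (-t / 2)) := by
        rw [Real.rpow_def_of_pos ht, Real.exp_add, mul_comm (Real.log t) s]
    _ ≤ Real.exp (s * Real.log (8 * (s + 1)) + (-(3 / 8) * t)) := Real.exp_le_exp.2 hkey
    _ = _ := by rw [Real.exp_add]

lemma chiSq_integrand_integrable {s : ℝ} (hs : 0 ≤ s) {x : ℝ} (hx : 0 < x) :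
    IntegrableOn (fun t : ℝ => t ^ s * Real.exp (-t / 2)) (Set.Ioi x) := by
  have hmeas : AEStronglyMeasurable (fun t : ℝ => t ^ s * Real.exp (-t / 2))
      (volume.restrict (Set.Ioi x)) := by
    apply ContinuousOn.aestronglyMeasurable _ measurableSet_Ioi
    intro t ht
    have ht0 : t ≠ 0 := (hx.trans ht).ne'
    exact ((Real.continuousAt_rpow_const t s (Or.inl ht0)).mul
      (Real.continuous_exp.continuousAt.comp (by fun_prop))).continuousWithinAt
  refine Integrable.mono'
    ((expTail_integrable (by norm_num : (0:ℝ) < 3/8) x).const_mul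
      (Real.exp (s * Real.log (8 * (s + 1))))) hmeas ?_
  filter_upwards [ae_restrict_mem measurableSet_Ioi] with t ht
  have ht0 : 0 < t := hx.trans ht
  rw [Real.norm_eq_abs, abs_of_nonneg (by positivity)]
  exact rpow_exp_bound hs ht0

lemma chiSq_tail_lower {s : ℝ} (hs : 0 ≤ s) {x : ℝ} (hx : 0 < x) :
    2 * (x ^ s * Real.exp (-x / 2)) ≤ ∫ t in Set.Ioi x, t ^ s * Real.exp (-t / 2) := by
  have h1 : ∫ t in Set.Ioi x, x ^ s * Real.exp (-t / 2)
      ≤ ∫ t in Set.Ioi x, t ^ s * Real.exp (-t / 2) := by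
    refine setIntegral_mono_on ?_ (chiSq_integrand_integrable hs hx) measurableSet_Ioi ?_
    · have : IntegrableOn (fun t : ℝ => Real.exp (-(1/2) * t)) (Set.Ioi x) :=
        expTail_integrable (by norm_num) x
      exact ((this.congr_fun (fun t _ => by ring_nf) measurableSet_Ioi).const_mul _)
    · intro t ht
      have : x ^ s ≤ t ^ s := Real.rpow_le_rpow hx.le (le_of_lt ht) hs
      exact mul_le_mul_of_nonneg_right this (Real.exp_pos _).le
  have h2 : ∫ t in Set.Ioi x, x ^ s * Real.exp (-t / 2)
      = 2 * (x ^ s * Real.exp (-x / 2)) := by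
    rw [MeasureTheory.integral_const_mul]
    have : ∫ t in Set.Ioi x, Real.exp (-t / 2) = ∫ t in Set.Ioi x, Real.exp (-(1/2) * t) := by
      refine setIntegral_congr_fun measurableSet_Ioi fun t _ => by ring_nf
    rw [this, expTail_integral (by norm_num : (0:ℝ) < 1/2)]
    rw [show -(1/2 : ℝ) * x = -x/2 by ring]
    ring
  linarith

lemma chiSq_tail_upper {s : ℝ} (hs : 0 ≤ s) {ε x : ℝ} (hε : 0 < ε) (hε2 : ε < 1/2)
    (hx : 0 < x) (hsx : s ≤ ε * x) :
    ∫ t in Set.Ioi x, t ^ s * Real.exp (-t / 2) ≤ x ^ s * Real.exp (-x / 2) / (1/2 - ε) := by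
  have hc : (0:ℝ) < 1/2 - ε := by linarith
  have hpt : ∀ t ∈ Set.Ioi x, t ^ s * Real.exp (-t / 2)
      ≤ (x ^ s * Real.exp (-ε * x)) * Real.exp (-(1/2 - ε) * t) := by
    intro t ht
    have ht0 : 0 < t := hx.trans ht
    have hlog : Real.log t - Real.log x ≤ (t - x) / x := by
      have h1 := Real.log_le_sub_one_of_pos (show 0 < t / x by positivity)
      rw [Real.log_div ht0.ne' hx.ne'] at h1
      have : t / x - 1 = (t - x) / x := by field_simp
      linarith [this ▸ h1]
    have hkey : s * Real.log t + (-t / 2)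
        ≤ s * Real.log x + (-ε * x) + (-(1/2 - ε) * t) := by
      have h2 : s * (Real.log t - Real.log x) ≤ ε * (t - x) := by
        have h3 : s * ((t - x) / x) ≤ ε * (t - x) := by
          rw [← mul_div_assoc, div_le_iff₀ hx]
          have h4 : (0:ℝ) ≤ t - x := by linarith [le_of_lt (Set.mem_Ioi.mp ht)]
          nlinarith
        calc s * (Real.log t - Real.log x) ≤ s * ((t - x) / x) :=
              mul_le_mul_of_nonneg_left hlog hs
          _ ≤ ε * (t - x) := h3
      nlinarith
    calc t ^ s * Real.exp (-t / 2)
        = Real.exp (s * Real.log t + (-t / 2)) := by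
          rw [Real.rpow_def_of_pos ht0, Real.exp_add, mul_comm (Real.log t) s]
      _ ≤ Real.exp (s * Real.log x + (-ε * x) + (-(1/2 - ε) * t)) := Real.exp_le_exp.2 hkey
      _ = (x ^ s * Real.exp (-ε * x)) * Real.exp (-(1/2 - ε) * t) := by
          rw [Real.exp_add, Real.exp_add, Real.rpow_def_of_pos hx, mul_comm (Real.log x) s]
  have hint : ∫ t in Set.Ioi x, (x ^ s * Real.exp (-ε * x)) * Real.exp (-(1/2 - ε) * t)
      = x ^ s * Real.exp (-x / 2) / (1/2 - ε) := by
    rw [MeasureTheory.integral_const_mul, expTail_integral hc, ← mul_div_assoc, mul_assoc,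
      ← Real.exp_add]
    congr 2
    ring
  calc ∫ t in Set.Ioi x, t ^ s * Real.exp (-t / 2)
      ≤ ∫ t in Set.Ioi x, (x ^ s * Real.exp (-ε * x)) * Real.exp (-(1/2 - ε) * t) := by
        refine setIntegral_mono_on (chiSq_integrand_integrable hs hx)
          ((expTail_integrable hc x).const_mul _) measurableSet_Ioi hpt
    _ = _ := hint

/-- Main asymptotic: the tail integral divided by `x^s * exp(-x/2)` tends to `2`. -/
lemma chiSq_ratio_tendsto {s : ℝ} (hs : 0 ≤ s) :
    Tendsto (fun x : ℝ => (∫ t in Set.Ioi x, t ^ s * Real.exp (-t / 2)) /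
      (x ^ s * Real.exp (-x / 2))) atTop (𝓝 2) := by
  have hu : Tendsto (fun x : ℝ => (1/2 - 1 / Real.sqrt x)⁻¹) atTop (𝓝 2) := by
    have hsqrt : Tendsto Real.sqrt atTop atTop := by
      refine tendsto_atTop_atTop.2 fun b => ⟨(max b 0) ^ 2, fun a ha => ?_⟩
      calc b ≤ max b 0 := le_max_left _ _
        _ = Real.sqrt ((max b 0) ^ 2) := (Real.sqrt_sq (le_max_right _ _)).symm
        _ ≤ Real.sqrt a := Real.sqrt_le_sqrt ha
    have h0 : Tendsto (fun x : ℝ => 1 / Real.sqrt x) atTop (𝓝 0) :=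
      Tendsto.div_atTop tendsto_const_nhds hsqrt
    have h1 : Tendsto (fun x : ℝ => (1/2 : ℝ) - 1 / Real.sqrt x) atTop (𝓝 (1/2 - 0)) :=
      tendsto_const_nhds.sub h0
    have h2 := h1.inv₀ (by norm_num)
    norm_num at h2
    simpa [one_div] using h2
  refine tendsto_of_tendsto_of_tendsto_of_le_of_le' tendsto_const_nhds hu ?_ ?_
  · filter_upwards [eventually_gt_atTop (0:ℝ)] with x hx
    have hD : (0:ℝ) < x ^ s * Real.exp (-x / 2) := by positivity
    rw [le_div_iff₀ hD]
    linarith [chiSq_tail_lower hs hx]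
  · filter_upwards [eventually_ge_atTop (max (s^2) 5)] with x hx
    have hx5 : (5:ℝ) ≤ x := le_trans (le_max_right _ _) hx
    have hxs : s^2 ≤ x := le_trans (le_max_left _ _) hx
    have hx0 : (0:ℝ) < x := by linarith
    have hsq : (2:ℝ) < Real.sqrt x := by
      rw [Real.lt_sqrt (by norm_num)]; norm_num; linarith
    have hsq0 : 0 < Real.sqrt x := by linarith
    have hε : (0:ℝ) < 1 / Real.sqrt x := by positivity
    have hε2 : 1 / Real.sqrt x < 1/2 := by
      rw [div_lt_div_iff₀ hsq0 (by norm_num)]; linarith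
    have hsx : s ≤ (1 / Real.sqrt x) * x := by
      have heq : (1 / Real.sqrt x) * x = Real.sqrt x := by
        rw [one_div, inv_mul_eq_div, Real.div_sqrt]
      rw [heq]
      exact (Real.le_sqrt hs hx0.le).2 hxs
    have hD : (0:ℝ) < x ^ s * Real.exp (-x / 2) := by positivity
    rw [div_le_iff₀ hD]
    exact le_trans (chiSq_tail_upper hs hε hε2 hx0 hsx) (le_of_eq (div_eq_inv_mul _ _))

/-- The chi-squared tail with `k` degrees of freedom. -/
noncomputable def chiSqTail (k : ℝ) (x : ℝ) : ℝ :=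
  ∫ t in Set.Ioi x, t ^ (k / 2 - 1) * Real.exp (-t / 2) / (2 ^ (k / 2) * Real.Gamma (k / 2))

/-- For fixed real `k ≥ 2`, as `x → +∞`,
`(-ln T_k(x))^(k-2) · (Γ(k/2) T_k(x))^(-2) ∼ e^x`. -/
theorem chiSq_tail_exp_asymptotic (k : ℝ) (hk : 2 ≤ k) :
    Tendsto
      (fun x : ℝ =>
        (-Real.log (chiSqTail k x)) ^ (k - 2) * (Real.Gamma (k / 2) * chiSqTail k x) ^ (-2 : ℝ) *
          Real.exp (-x))
      atTop (nhds 1) := by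
  have hk2 : (0:ℝ) < k / 2 := by linarith
  have hGam : 0 < Real.Gamma (k / 2) := Real.Gamma_pos_of_pos hk2
  have hC2 : (0:ℝ) < (2:ℝ) ^ (k / 2) := Real.rpow_pos_of_pos two_pos _
  set s : ℝ := k / 2 - 1 with hs_def
  have hs : 0 ≤ s := by rw [hs_def]; linarith
  set F : ℝ → ℝ := fun x => ∫ t in Set.Ioi x, t ^ s * Real.exp (-t / 2) with hF_def
  set D : ℝ → ℝ := fun x => x ^ s * Real.exp (-x / 2) with hD_def
  set R : ℝ → ℝ := fun x => F x / D x with hR_def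
  have hT : ∀ x, chiSqTail k x = F x / ((2:ℝ) ^ (k / 2) * Real.Gamma (k / 2)) := by
    intro x
    unfold chiSqTail
    rw [MeasureTheory.integral_div]
  have hratio : Tendsto R atTop (𝓝 2) := chiSq_ratio_tendsto hs
  -- Step 1 : `-log T / x → 1/2`
  have hlog0 : Tendsto (fun x : ℝ => Real.log x / x) atTop (𝓝 0) :=
    Real.isLittleO_log_id_atTop.tendsto_div_nhds_zero
  have hlogR : Tendsto (fun x : ℝ => Real.log (R x)) atTop (𝓝 (Real.log 2)) :=
    ((Real.continuousAt_log (by norm_num)).tendsto).comp hratio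
  have hlogRx : Tendsto (fun x : ℝ => Real.log (R x) / x) atTop (𝓝 0) :=
    hlogR.div_atTop tendsto_id
  have hconst : Tendsto
      (fun x : ℝ => Real.log ((2:ℝ) ^ (k / 2) * Real.Gamma (k / 2)) / x) atTop (𝓝 0) :=
    tendsto_const_nhds.div_atTop tendsto_id
  have hphi : Tendsto (fun x : ℝ => 1/2 - s * (Real.log x / x) - Real.log (R x) / x
      + Real.log ((2:ℝ) ^ (k / 2) * Real.Gamma (k / 2)) / x) atTop (𝓝 (1/2)) := by
    have := (((tendsto_const_nhds (x := (1/2:ℝ))).sub (hlog0.const_mul s)).sub hlogRx).add hconst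
    simpa using this
  have hL : Tendsto (fun x : ℝ => (-Real.log (chiSqTail k x)) / x) atTop (𝓝 (1/2)) := by
    refine Tendsto.congr' ?_ hphi
    filter_upwards [eventually_gt_atTop (0:ℝ),
      hratio.eventually_const_lt (by norm_num : (1:ℝ) < 2)] with x hx hR1
    have hDpos : 0 < D x := by
      have : D x = x ^ s * Real.exp (-x / 2) := rfl
      rw [this]; positivity
    have hRpos : 0 < R x := by linarith
    have hFx : F x = R x * D x := by
      rw [hR_def]; field_simp
    have hFpos : 0 < F x := by rw [hFx]; positivity
    have hlogT : Real.log (chiSqTail k x)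
        = Real.log (R x) + (s * Real.log x + (-x / 2))
          - Real.log ((2:ℝ) ^ (k / 2) * Real.Gamma (k / 2)) := by
      rw [hT x, Real.log_div hFpos.ne' (by positivity), hFx,
        Real.log_mul hRpos.ne' hDpos.ne']
      congr 2
      have : D x = x ^ s * Real.exp (-x / 2) := rfl
      rw [this, Real.log_mul (by positivity) (Real.exp_ne_zero _),
        Real.log_rpow hx, Real.log_exp]
    rw [hlogT]
    field_simp
    ring
  -- Step 2 : `Γ(k/2) T / D → 2 / 2^(k/2)`
  have hB : Tendsto (fun x : ℝ => Real.Gamma (k / 2) * chiSqTail k x / D x) atTop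
      (𝓝 (2 / (2:ℝ) ^ (k / 2))) := by
    refine Tendsto.congr' ?_ (hratio.div_const ((2:ℝ) ^ (k / 2)))
    filter_upwards with x
    have h1 : Real.Gamma (k / 2) * chiSqTail k x = F x / (2:ℝ) ^ (k / 2) := by
      rw [hT x]; field_simp
    rw [hR_def, h1, div_div, div_div, mul_comm]
  -- Step 3 : combine
  have h1 : Tendsto (fun x : ℝ => ((-Real.log (chiSqTail k x)) / x) ^ (k - 2)) atTop
      (𝓝 ((1/2 : ℝ) ^ (k - 2))) :=
    hL.rpow_const (Or.inl (by norm_num))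
  have h2 : Tendsto (fun x : ℝ => (Real.Gamma (k / 2) * chiSqTail k x / D x) ^ (-2 : ℝ)) atTop
      (𝓝 ((2 / (2:ℝ) ^ (k / 2)) ^ (-2 : ℝ))) :=
    hB.rpow_const (Or.inl (by positivity))
  have hval : ((1/2 : ℝ) ^ (k - 2)) * ((2 / (2:ℝ) ^ (k / 2)) ^ (-2 : ℝ)) = 1 := by
    have e1 : (1/2 : ℝ) = (2:ℝ) ^ (-1 : ℝ) := by
      rw [Real.rpow_neg_one]; norm_num
    have e2 : (2 / (2:ℝ) ^ (k / 2)) = (2:ℝ) ^ (1 - k / 2) := by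
      rw [Real.rpow_sub two_pos, Real.rpow_one]
    rw [e1, e2, ← Real.rpow_mul (by norm_num : (0:ℝ) ≤ 2),
      ← Real.rpow_mul (by norm_num : (0:ℝ) ≤ 2), ← Real.rpow_add two_pos,
      show (-1) * (k - 2) + (1 - k / 2) * (-2) = 0 by ring, Real.rpow_zero]
  have hmul := h1.mul h2
  rw [hval] at hmul
  refine Tendsto.congr' ?_ hmul
  filter_upwards [eventually_gt_atTop (0:ℝ),
    hL.eventually_const_lt (by norm_num : (0:ℝ) < 1/2)] with x hx hLx
  have hLpos : 0 < -Real.log (chiSqTail k x) := by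
    have h := mul_pos hLx hx
    rwa [div_mul_cancel₀ _ hx.ne'] at h
  have hDpos : 0 < D x := by
    have : D x = x ^ s * Real.exp (-x / 2) := rfl
    rw [this]; positivity
  have hFpos : 0 < F x :=
    lt_of_lt_of_le (by positivity) (chiSq_tail_lower hs hx)
  have hTpos : 0 < chiSqTail k x := by
    rw [hT x]; positivity
  have hGpos : 0 < Real.Gamma (k / 2) * chiSqTail k x := mul_pos hGam hTpos
  rw [Real.div_rpow hLpos.le hx.le, Real.div_rpow hGpos.le hDpos.le]
  have hDval : (D x) ^ (-2 : ℝ) = (x ^ (k - 2))⁻¹ * Real.exp x := by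
    have hd : D x = x ^ s * Real.exp (-x / 2) := rfl
    rw [hd, Real.mul_rpow (by positivity) (Real.exp_pos _).le, ← Real.rpow_mul hx.le,
      ← Real.exp_mul, show s * (-2 : ℝ) = -(k - 2) by rw [hs_def]; ring,
      show (-x / 2) * (-2 : ℝ) = x by ring, Real.rpow_neg hx.le]
  rw [hDval, Real.exp_neg]
  have hxp : (0:ℝ) < x ^ (k - 2) := Real.rpow_pos_of_pos hx _
  field_simp
end

section
/- Let δ ≥ −1/2 be real, c ≥ 0, ρ ≥ 0, and t₁ ≥ 0. Then ∫_{ρ − c t₁}^∞ (v + c t₁)^{δ+1/2} e^{−v²} dv ≤ (2 c t₁)^{δ+1/2} · √π + 2^{δ−1/2} · Γ(δ/2 + 3/4). -/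
open Real MeasureTheory

/-- For real `δ ≥ -1/2`, `c ≥ 0`, `ρ ≥ 0`, `t₁ ≥ 0`,
`∫_{ρ-ct₁}^∞ (v+ct₁)^(δ+1/2) e^(-v²) dv ≤ (2ct₁)^(δ+1/2) √π + 2^(δ-1/2) Γ(δ/2+3/4)`. -/
theorem integral_shifted_power_exp_bound (δ c ρ t₁ : ℝ)
    (hδ : -1/2 ≤ δ) (hc : 0 ≤ c) (hρ : 0 ≤ ρ) (ht₁ : 0 ≤ t₁) :
    (∫ v in Set.Ioi (ρ - c * t₁), (v + c * t₁) ^ (δ + 1/2) * Real.exp (-v ^ 2)) ≤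
      (2 * c * t₁) ^ (δ + 1/2) * Real.sqrt π + 2 ^ (δ - 1/2) * Real.Gamma (δ / 2 + 3/4) := by
  have hp : (0:ℝ) ≤ δ + 1/2 := by linarith
  set p := δ + 1/2 with hp_def
  set k := c * t₁ with hk_def
  have hk : 0 ≤ k := mul_nonneg hc ht₁
  set a := ρ - c * t₁ with ha_def
  have hak : ρ = a + k := by rw [ha_def, hk_def]; ring
  set g2 : ℝ → ℝ :=
    (Set.Ioi (0:ℝ)).indicator (fun v => 2 ^ p * (v ^ p * Real.exp (-1 * v ^ 2))) with hg2_def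
  have hg2_nonneg : ∀ v, 0 ≤ g2 v := by
    intro v
    apply Set.indicator_nonneg
    intro x hx
    have hx0 : (0:ℝ) < x := hx
    positivity
  have hint2 : Integrable g2 := by
    refine IntegrableOn.integrable_indicator ?_ measurableSet_Ioi
    exact (integrableOn_rpow_mul_exp_neg_mul_sq one_pos (by linarith : (-1:ℝ) < p)).const_mul _
  have hint1 : Integrable (fun v : ℝ => (2*k) ^ p * Real.exp (-v ^ 2)) := by
    have := (integrable_exp_neg_mul_sq one_pos).const_mul ((2*k) ^ p)
    simpa using this
  have hintG : Integrable (fun v => (2*k) ^ p * Real.exp (-v ^ 2) + g2 v) := hint1.add hint2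
  have hbound : ∀ v ∈ Set.Ioi a, (v + k) ^ p * Real.exp (-v ^ 2) ≤
      (2*k) ^ p * Real.exp (-v ^ 2) + g2 v := by
    intro v hv
    have hv' : a < v := hv
    have h0 : 0 ≤ v + k := by
      have : 0 ≤ a + k := by rw [← hak]; exact hρ
      linarith
    rcases le_or_gt v k with h | h
    · have h1 : (v + k) ^ p ≤ (2*k) ^ p := Real.rpow_le_rpow h0 (by linarith) hp
      have h2 := mul_le_mul_of_nonneg_right h1 (Real.exp_nonneg (-v ^ 2))
      linarith [hg2_nonneg v]
    · have hv0 : (0:ℝ) < v := lt_of_le_of_lt hk h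
      have h1 : (v + k) ^ p ≤ (2*v) ^ p := Real.rpow_le_rpow h0 (by linarith) hp
      have h2 : g2 v = 2 ^ p * (v ^ p * Real.exp (-1 * v ^ 2)) := Set.indicator_of_mem hv0 _
      have h3 : (2*v) ^ p = 2 ^ p * v ^ p := Real.mul_rpow (by norm_num) hv0.le
      have h4 : Real.exp (-1 * v ^ 2) = Real.exp (-v ^ 2) := by norm_num
      have h5 : (v + k) ^ p * Real.exp (-v ^ 2) ≤ 2 ^ p * (v ^ p * Real.exp (-v ^ 2)) := by
        rw [← mul_assoc, ← h3]
        exact mul_le_mul_of_nonneg_right h1 (Real.exp_nonneg _)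
      have hnn : (0:ℝ) ≤ (2*k) ^ p * Real.exp (-v ^ 2) :=
        mul_nonneg (Real.rpow_nonneg (by linarith) _) (Real.exp_nonneg _)
      rw [h2, h4]
      linarith
  have hf_meas : AEStronglyMeasurable (fun v : ℝ => (v + k) ^ p * Real.exp (-v ^ 2))
      (volume.restrict (Set.Ioi a)) := by
    apply Continuous.aestronglyMeasurable
    have h1 : Continuous fun v : ℝ => (v + k) ^ p := by
      rw [continuous_iff_continuousAt]
      intro x
      exact (Real.continuousAt_rpow_const _ _ (Or.inr hp)).comp
        ((continuous_id.add continuous_const).continuousAt)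
    exact h1.mul (Real.continuous_exp.comp (continuous_pow 2).neg)
  have hf_int : IntegrableOn (fun v : ℝ => (v + k) ^ p * Real.exp (-v ^ 2)) (Set.Ioi a) := by
    refine Integrable.mono' hintG.integrableOn hf_meas ?_
    filter_upwards [ae_restrict_mem measurableSet_Ioi] with v hv
    have h0 : 0 ≤ v + k := by
      have hv' : a < v := hv
      have : 0 ≤ a + k := by rw [← hak]; exact hρ
      linarith
    rw [Real.norm_eq_abs, abs_of_nonneg (mul_nonneg (Real.rpow_nonneg h0 _) (Real.exp_nonneg _))]
    exact hbound v hv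
  have step1 : (∫ v in Set.Ioi a, (v + k) ^ p * Real.exp (-v ^ 2)) ≤
      ∫ v in Set.Ioi a, ((2*k) ^ p * Real.exp (-v ^ 2) + g2 v) :=
    setIntegral_mono_on hf_int hintG.integrableOn measurableSet_Ioi hbound
  have step2 : (∫ v in Set.Ioi a, ((2*k) ^ p * Real.exp (-v ^ 2) + g2 v)) =
      (∫ v in Set.Ioi a, (2*k) ^ p * Real.exp (-v ^ 2)) + ∫ v in Set.Ioi a, g2 v :=
    integral_add hint1.integrableOn hint2.integrableOn
  have step3 : (∫ v in Set.Ioi a, (2*k) ^ p * Real.exp (-v ^ 2)) ≤ (2*k) ^ p * Real.sqrt π := by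
    rw [integral_const_mul]
    have hle : (∫ v in Set.Ioi a, Real.exp (-v ^ 2)) ≤ ∫ v : ℝ, Real.exp (-v ^ 2) := by
      apply setIntegral_le_integral
      · simpa using integrable_exp_neg_mul_sq one_pos
      · filter_upwards with v
        positivity
    have hval : (∫ v : ℝ, Real.exp (-v ^ 2)) = Real.sqrt π := by
      simpa using integral_gaussian 1
    calc (2*k) ^ p * ∫ v in Set.Ioi a, Real.exp (-v ^ 2)
        ≤ (2*k) ^ p * ∫ v : ℝ, Real.exp (-v ^ 2) :=
          mul_le_mul_of_nonneg_left hle (Real.rpow_nonneg (by linarith) _)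
      _ = (2*k) ^ p * Real.sqrt π := by rw [hval]
  have step4 : (∫ v in Set.Ioi a, g2 v) ≤ 2 ^ (δ - 1/2) * Real.Gamma (δ / 2 + 3/4) := by
    have hle : (∫ v in Set.Ioi a, g2 v) ≤ ∫ v, g2 v :=
      setIntegral_le_integral hint2 (by filter_upwards with v; exact hg2_nonneg v)
    have hval : (∫ v, g2 v) = 2 ^ (δ - 1/2) * Real.Gamma (δ / 2 + 3/4) := by
      rw [hg2_def, integral_indicator measurableSet_Ioi, integral_const_mul]
      have hcongr : (∫ v in Set.Ioi (0:ℝ), v ^ p * Real.exp (-1 * v ^ 2)) =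
          ∫ v in Set.Ioi (0:ℝ), v ^ p * Real.exp (-v ^ (2:ℝ)) := by
        refine setIntegral_congr_fun measurableSet_Ioi fun x hx => ?_
        rw [show x ^ (2:ℝ) = x ^ (2:ℕ) from Real.rpow_natCast x 2]
        norm_num
      rw [hcongr, integral_rpow_mul_exp_neg_rpow two_pos (by linarith : (-1:ℝ) < p)]
      have e1 : (p + 1) / 2 = δ / 2 + 3/4 := by rw [hp_def]; ring
      have e2 : (2:ℝ) ^ p * (1/2) = 2 ^ (δ - 1/2) := by
        rw [show (1:ℝ)/2 = 2 ^ (-1:ℝ) by norm_num [Real.rpow_neg_one],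
          ← Real.rpow_add two_pos]
        congr 1
        rw [hp_def]
        ring
      rw [e1, ← mul_assoc, e2]
    linarith
  have hgoal : (2 * c * t₁ : ℝ) = 2 * k := by rw [hk_def]; ring
  rw [hgoal]
  calc (∫ v in Set.Ioi a, (v + k) ^ p * Real.exp (-v ^ 2))
      ≤ (∫ v in Set.Ioi a, (2*k) ^ p * Real.exp (-v ^ 2)) + ∫ v in Set.Ioi a, g2 v := by
        rw [← step2]; exact step1
    _ ≤ (2*k) ^ p * Real.sqrt π + 2 ^ (δ - 1/2) * Real.Gamma (δ / 2 + 3/4) :=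
        add_le_add step3 step4
end
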